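/- arXiv:2008.07926 — 6 statements merged into one kernel-verified Lean document; each statement's English description precedes it below -/
import Mathlib

section
/- Let 1 < k < n be integers and for each 1 ≤ i ≤ n let X_i = {0, 1, ..., k−1}. For every subset α = {i_1, ..., i_k} ⊆ {1, ..., n} of cardinality k, define a measure μ_α on X_α = ∏_{i∈α} X_i by μ_α({x}) = k^{1−k} if x_{i_1} + ... + x_{i_k} ≡ 1 (mod k) and μ_α({x}) = 0 otherwise. Then every μ_α is a probability measure, the family {μ_α} is consistent, yet there exists no uniting probability measure for this family. In particular, for 1 < k < n consistency is not sufficient for the existence of a uniting measure. -/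
open MeasureTheory
open scoped ENNReal

/-- The measure on `X_α = ∏_{i ∈ α} {0, …, k-1}` assigning mass `k^{1-k}` to points
whose coordinate sum is `≡ 1 (mod k)` and `0` to all other points. -/
noncomputable def muZero (n k : ℕ) (α : Finset (Fin n)) :
    Measure ((i : α) → Fin k) :=
  ∑ x : ((i : α) → Fin k),
    (if (∑ i : α, (x i).val) % k = 1 then ((k : ℝ≥0∞) ^ (k - 1))⁻¹ else 0) •
      Measure.dirac x

section helpersX
open Finset
section helpers
variable {k : ℕ}

/-- split a sum over a fintype at one element -/
lemma sum_split {M : Type*} [AddCommMonoid M] {ι : Type*} [Fintype ι] [DecidableEq ι]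
    (i0 : ι) (f : ι → M) :
    ∑ i, f i = f i0 + ∑ j : {i : ι // i ≠ i0}, f j.1 := by
  rw [← Finset.add_sum_erase _ f (Finset.mem_univ i0)]
  congr 1
  exact Finset.sum_subtype _ (fun x => by simp) f

lemma count_sum_eq (hk : 1 < k) (ι : Type*) [Fintype ι] [DecidableEq ι] [Nonempty ι]
    (c : ZMod k) :
    (Finset.univ.filter fun y : ι → Fin k =>
        (∑ i, (((y i : Fin k) : ℕ) : ZMod k)) = c).card = k ^ (Fintype.card ι - 1) := by
  classical
  haveI : NeZero k := ⟨by omega⟩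
  obtain ⟨i0⟩ := ‹Nonempty ι›
  have key : ∀ a : ZMod k, ((a.val : ℕ) : ZMod k) = a := fun a => by
    simp [ZMod.natCast_val, ZMod.cast_id]
  set F : (ι → Fin k) → ({i : ι // i ≠ i0} → Fin k) := fun y j => y j.1 with hF
  set G : ({i : ι // i ≠ i0} → Fin k) → (ι → Fin k) := fun z i =>
    if h : i = i0 then ⟨(c - ∑ j : {i : ι // i ≠ i0}, (((z j : Fin k) : ℕ) : ZMod k)).val,
      ZMod.val_lt _⟩ else z ⟨i, h⟩ with hG
  have hcard : (Finset.univ.filter fun y : ι → Fin k =>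
      (∑ i, (((y i : Fin k) : ℕ) : ZMod k)) = c).card
      = (Finset.univ : Finset ({i : ι // i ≠ i0} → Fin k)).card := by
    apply Finset.card_nbij' F G
    · intro y _; exact Finset.mem_univ _
    · intro z _
      rw [Finset.mem_coe, Finset.mem_filter]
      refine ⟨Finset.mem_univ _, ?_⟩
      rw [sum_split i0]
      have h1 : G z i0 = ⟨(c - ∑ j : {i : ι // i ≠ i0},
          (((z j : Fin k) : ℕ) : ZMod k)).val, ZMod.val_lt _⟩ := by
        simp [hG]
      have h2 : ∀ j : {i : ι // i ≠ i0}, G z j.1 = z j := fun j => by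
        simp [hG, j.2]
      simp only [h1, h2]
      rw [key]
      ring
    · intro y hy
      rw [Finset.mem_coe, Finset.mem_filter] at hy
      funext i
      by_cases h : i = i0
      · subst h
        have : ∑ j : {x : ι // x ≠ i}, (((y j.1 : Fin k) : ℕ) : ZMod k)
            = c - (((y i : Fin k) : ℕ) : ZMod k) := by
          have := (sum_split i fun i' => (((y i' : Fin k) : ℕ) : ZMod k)).symm
          rw [hy.2] at this
          linear_combination this
        simp only [hG, hF, dif_pos rfl, this]
        apply Fin.ext
        simp only [sub_sub_cancel]
        exact ZMod.val_cast_of_lt (y i).isLt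
      · simp [hG, hF, h]
    · intro z _
      funext j
      simp [hG, hF, j.2]
  rw [hcard, Finset.card_univ, Fintype.card_fun, Fintype.card_fin]
  congr 1
  rw [Fintype.card_subtype_compl, Fintype.card_subtype_eq]
end helpers
section measures
open scoped Classical

lemma sum_smul_dirac_apply {γ : Type*} [Fintype γ] [MeasurableSpace γ]
    [MeasurableSingletonClass γ] (c : γ → ℝ≥0∞) (s : Set γ) :
    (∑ x, c x • Measure.dirac x) s = ∑ x ∈ Finset.univ.filter (· ∈ s), c x := by
  rw [Measure.finset_sum_apply]
  have hs : MeasurableSet s := s.toFinite.measurableSet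
  rw [Finset.sum_filter]
  refine Finset.sum_congr rfl fun x _ => ?_
  rw [Measure.smul_apply, Measure.dirac_apply' _ hs, smul_eq_mul]
  by_cases h : x ∈ s <;> simp [Set.indicator_apply, h]

lemma muZero_apply (n k : ℕ) (α : Finset (Fin n)) (s : Set ((i : α) → Fin k)) :
    muZero n k α s = ∑ x ∈ Finset.univ.filter
      (fun x : (i : α) → Fin k => x ∈ s ∧ (∑ i : α, (x i).val) % k = 1),
      ((k : ℝ≥0∞) ^ (k - 1))⁻¹ := by
  rw [muZero, sum_smul_dirac_apply]
  rw [Finset.sum_filter, Finset.sum_filter]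
  refine Finset.sum_congr rfl fun x _ => ?_
  by_cases h1 : x ∈ s <;> by_cases h2 : (∑ i : α, (x i).val) % k = 1 <;>
    simp only [h1, h2, and_self, and_true, and_false, true_and, false_and, if_true, if_false, ↓reduceIte]

lemma muZero_singleton (n k : ℕ) (α : Finset (Fin n)) (y : (i : α) → Fin k) :
    muZero n k α {y} = if (∑ i : α, (y i).val) % k = 1
      then ((k : ℝ≥0∞) ^ (k - 1))⁻¹ else 0 := by
  rw [muZero, sum_smul_dirac_apply]
  rw [Finset.sum_filter]
  simp only [Set.mem_singleton_iff]
  rw [Finset.sum_ite_eq' Finset.univ y]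
  simp

end measures
section counting
variable {k : ℕ}

lemma mod_iff (hk : 1 < k) {ι : Type*} [Fintype ι] (x : ι → Fin k) :
    (∑ i, (x i).val) % k = 1 ↔ (∑ i, (((x i : Fin k) : ℕ) : ZMod k)) = 1 := by
  rw [← Nat.cast_sum]
  rw [show (1 : ZMod k) = ((1 : ℕ) : ZMod k) by simp]
  rw [ZMod.natCast_eq_natCast_iff', Nat.mod_eq_of_lt hk]

lemma card_cond (hk : 1 < k) {n : ℕ} (α : Finset (Fin n)) (hα : α.card = k) :
    (Finset.univ.filter fun x : (i : α) → Fin k => (∑ i : α, (x i).val) % k = 1).card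
      = k ^ (k - 1) := by
  classical
  haveI : Nonempty ↥α := Finset.nonempty_coe_sort.2 (Finset.card_pos.mp (by omega))
  have hcnt := count_sum_eq hk (↥α) (1 : ZMod k)
  rw [Fintype.card_coe, hα] at hcnt
  rw [← hcnt]
  congr 1
  apply Finset.filter_congr
  intro x _
  exact mod_iff hk x

lemma muZero_prob {n k : ℕ} (hk : 1 < k) (α : Finset (Fin n)) (hα : α.card = k) :
    IsProbabilityMeasure (muZero n k α) := by
  classical
  constructor
  rw [muZero_apply]
  simp only [Set.mem_univ, true_and]
  rw [Finset.sum_const, card_cond hk α hα, nsmul_eq_mul, Nat.cast_pow]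
  exact ENNReal.mul_inv_cancel
    (pow_ne_zero _ (by exact_mod_cast (by omega : k ≠ 0)))
    (ENNReal.pow_ne_top (ENNReal.natCast_ne_top k))
end counting
section marginal

def eSub {n : ℕ} (α S : Finset (Fin n)) (hS : S ⊆ α) :
    {i : ↥α // (i : Fin n) ∈ S} ≃ ↥S where
  toFun i := ⟨i.1.1, i.2⟩
  invFun j := ⟨⟨j.1, hS j.2⟩, j.2⟩
  left_inv i := rfl
  right_inv j := rfl

lemma card_fiber {n k : ℕ} (hk : 1 < k) (α S : Finset (Fin n)) (hα : α.card = k)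
    (hS : S ⊆ α) (hne : S ≠ α) (pf : ∀ i : ↥S, (i : Fin n) ∈ α) (y : (i : S) → Fin k) :
    (Finset.univ.filter (fun x : (i : α) → Fin k =>
        (fun i : ↥S => x ⟨i.1, pf i⟩) = y ∧ (∑ i : α, (x i).val) % k = 1)).card
      = k ^ (k - S.card - 1) := by
  classical
  obtain ⟨a, ha, hna⟩ := Finset.exists_of_ssubset (hS.ssubset_of_ne hne)
  haveI hT : Nonempty {i : ↥α // ¬ (i : Fin n) ∈ S} := ⟨⟨⟨a, ha⟩, hna⟩⟩
  have hcardP : Fintype.card {i : ↥α // (i : Fin n) ∈ S} = S.card :=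
    (Fintype.card_congr (eSub α S hS)).trans (Fintype.card_coe S)
  have hcardT : Fintype.card {i : ↥α // ¬ (i : Fin n) ∈ S} = k - S.card := by
    rw [Fintype.card_subtype_compl, hcardP, Fintype.card_coe, hα]
  -- convert the mod condition to ZMod form
  have hfc : (Finset.univ.filter (fun x : (i : α) → Fin k =>
        (fun i : ↥S => x ⟨i.1, pf i⟩) = y ∧ (∑ i : α, (x i).val) % k = 1))
      = (Finset.univ.filter (fun x : (i : α) → Fin k =>
        (fun i : ↥S => x ⟨i.1, pf i⟩) = y ∧
          (∑ i : α, (((x i : Fin k) : ℕ) : ZMod k)) = 1)) :=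
    Finset.filter_congr fun x _ => by rw [mod_iff hk]
  rw [hfc]
  have hcnt := count_sum_eq hk ({i : ↥α // ¬ (i : Fin n) ∈ S})
    (1 - ∑ j : ↥S, (((y j : Fin k) : ℕ) : ZMod k))
  rw [hcardT] at hcnt
  rw [← hcnt]
  have hbij := Finset.card_nbij'
    (s := Finset.univ.filter (fun x : (i : α) → Fin k =>
        (fun i : ↥S => x ⟨i.1, pf i⟩) = y ∧
          (∑ i : α, (((x i : Fin k) : ℕ) : ZMod k)) = 1))
    (t := Finset.univ.filter (fun z : {i : ↥α // ¬ (i : Fin n) ∈ S} → Fin k =>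
        (∑ j, (((z j : Fin k) : ℕ) : ZMod k))
          = 1 - ∑ j : ↥S, (((y j : Fin k) : ℕ) : ZMod k)))
    (fun x (j : {i : ↥α // ¬ (i : Fin n) ∈ S}) => x j.1)
    (fun z (i : ↥α) => if h : (i : Fin n) ∈ S then y ⟨i.1, h⟩ else z ⟨i, h⟩)
    ?hi ?hj ?li ?ri
  · exact hbij
  case hi =>
    intro x hx
    rw [Finset.mem_coe, Finset.mem_filter] at hx ⊢
    obtain ⟨-, hx1, hx2⟩ := hx
    refine ⟨Finset.mem_univ _, ?_⟩
    have hyy : ∀ i : {i : ↥α // (i : Fin n) ∈ S}, x i.1 = y ⟨i.1.1, i.2⟩ :=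
      fun i => congrFun hx1 ⟨i.1.1, i.2⟩
    have hsplit := Fintype.sum_subtype_add_sum_subtype (fun i : ↥α => (i : Fin n) ∈ S)
      (fun i : ↥α => (((x i : Fin k) : ℕ) : ZMod k))
    have h1 : ∑ i : {i : ↥α // (i : Fin n) ∈ S}, (((x i.1 : Fin k) : ℕ) : ZMod k)
        = ∑ j : ↥S, (((y j : Fin k) : ℕ) : ZMod k) := by
      refine Fintype.sum_equiv (eSub α S hS) _ _ fun i => ?_
      rw [hyy i]
      rfl
    linear_combination hsplit + hx2 - h1
  case hj =>
    intro z hz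
    rw [Finset.mem_coe, Finset.mem_filter] at hz ⊢
    obtain ⟨-, hz⟩ := hz
    have hproj : (fun i : ↥S =>
        (fun i : ↥α => if h : (i : Fin n) ∈ S then y ⟨i.1, h⟩ else z ⟨i, h⟩) ⟨i.1, pf i⟩) = y := by
      funext j
      simp only [dif_pos j.2]
    refine ⟨Finset.mem_univ _, hproj, ?_⟩
    have hsplit := Fintype.sum_subtype_add_sum_subtype (fun i : ↥α => (i : Fin n) ∈ S)
      (fun i : ↥α => ((((if h : (i : Fin n) ∈ S then y ⟨i.1, h⟩ else z ⟨i, h⟩) : Fin k) : ℕ)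
        : ZMod k))
    have h1 : ∑ i : {i : ↥α // (i : Fin n) ∈ S},
        ((((if h : (i.1 : Fin n) ∈ S then y ⟨i.1.1, h⟩ else z ⟨i.1, h⟩) : Fin k) : ℕ) : ZMod k)
        = ∑ j : ↥S, (((y j : Fin k) : ℕ) : ZMod k) := by
      refine Fintype.sum_equiv (eSub α S hS) _ _ fun i => ?_
      rw [dif_pos i.2]
      rfl
    have h2 : ∑ i : {i : ↥α // ¬ (i.1 : Fin n) ∈ S},
        ((((if h : (i.1 : Fin n) ∈ S then y ⟨i.1.1, h⟩ else z ⟨i.1, h⟩) : Fin k) : ℕ) : ZMod k)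
        = ∑ j, (((z j : Fin k) : ℕ) : ZMod k) := by
      refine Fintype.sum_congr _ _ fun i => ?_
      rw [dif_neg i.2]
    linear_combination h1 + h2 + hz - hsplit
  case li =>
    intro x hx
    rw [Finset.mem_coe, Finset.mem_filter] at hx
    obtain ⟨-, hx1, -⟩ := hx
    funext i
    beta_reduce
    by_cases h : (i : Fin n) ∈ S
    · rw [dif_pos h]
      exact (congrFun hx1 ⟨i.1, h⟩).symm
    · rw [dif_neg h]
  case ri =>
    intro z _
    funext j
    beta_reduce
    rw [dif_neg j.2]

end marginal
noncomputable def unif (n k : ℕ) (S : Finset (Fin n)) : Measure ((i : S) → Fin k) :=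
  ∑ y : (i : S) → Fin k, ((k : ℝ≥0∞) ^ S.card)⁻¹ • Measure.dirac y

lemma map_muZero {n k : ℕ} (hk : 1 < k) (α S : Finset (Fin n)) (hα : α.card = k)
    (hS : S ⊆ α) (hne : S ≠ α) (pf : ∀ i : ↥S, (i : Fin n) ∈ α) :
    Measure.map (fun (x : (i : α) → Fin k) (i : S) => x ⟨i.1, pf i⟩) (muZero n k α)
      = unif n k S := by
  classical
  apply Measure.ext_of_singleton
  intro y
  rw [Measure.map_apply (measurable_of_countable _) (measurableSet_singleton y)]
  have hR : unif n k S {y} = ((k : ℝ≥0∞) ^ S.card)⁻¹ := by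
    rw [unif, sum_smul_dirac_apply, Finset.sum_filter]
    simp only [Set.mem_singleton_iff]
    rw [Finset.sum_ite_eq' Finset.univ y, if_pos (Finset.mem_univ y)]
  rw [hR, muZero_apply]
  have hset : (Finset.univ.filter (fun x : (i : α) → Fin k =>
      x ∈ ((fun (x : (i : α) → Fin k) (i : S) => x ⟨i.1, pf i⟩) ⁻¹' {y}) ∧
        (∑ i : α, (x i).val) % k = 1))
      = (Finset.univ.filter (fun x : (i : α) → Fin k =>
      (fun i : ↥S => x ⟨i.1, pf i⟩) = y ∧ (∑ i : α, (x i).val) % k = 1)) := by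
    apply Finset.filter_congr
    intro x _
    simp [Set.mem_preimage]
  rw [hset, Finset.sum_const, card_fiber hk α S hα hS hne pf y, nsmul_eq_mul, Nat.cast_pow]
  -- arithmetic: k^(k - s - 1) * (k^(k-1))⁻¹ = (k^s)⁻¹
  have hslt : S.card < k := by
    rw [← hα]; exact Finset.card_lt_card (hS.ssubset_of_ne hne)
  have h0 : (k : ℝ≥0∞) ≠ 0 := by exact_mod_cast (by omega : k ≠ 0)
  have htop : (k : ℝ≥0∞) ≠ ⊤ := ENNReal.natCast_ne_top k
  have hpow : (k : ℝ≥0∞) ^ (k - 1) = (k : ℝ≥0∞) ^ (k - S.card - 1) * (k : ℝ≥0∞) ^ S.card := by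
    rw [← pow_add]
    congr 1
    omega
  rw [hpow, ENNReal.mul_inv (Or.inl (pow_ne_zero _ h0)) (Or.inl (ENNReal.pow_ne_top htop)),
    ← mul_assoc, ENNReal.mul_inv_cancel (pow_ne_zero _ h0) (ENNReal.pow_ne_top htop), one_mul]

end helpersX

/-- for `1 < k < n`, the family `μ_α = muZero n k α` (for `|α| = k`) consists of
probability measures and is consistent, yet admits no uniting probability measure;
in particular consistency is not sufficient for the existence of a uniting measure. -/
theorem statement0 (n k : ℕ) (hk : 1 < k) (hkn : k < n) :
    (∀ α : Finset (Fin n), α.card = k → IsProbabilityMeasure (muZero n k α)) ∧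
    (∀ α β : Finset (Fin n), α.card = k → β.card = k →
      Measure.map (fun (x : (i : α) → Fin k) (i : (α ∩ β : Finset (Fin n))) =>
          x ⟨i.1, Finset.mem_of_mem_inter_left i.2⟩) (muZero n k α) =
      Measure.map (fun (x : (i : β) → Fin k) (i : (α ∩ β : Finset (Fin n))) =>
          x ⟨i.1, Finset.mem_of_mem_inter_right i.2⟩) (muZero n k β)) ∧
    ¬ ∃ μ : Measure (Fin n → Fin k), IsProbabilityMeasure μ ∧
        ∀ α : Finset (Fin n), α.card = k →
          Measure.map (fun (x : Fin n → Fin k) (i : α) => x i) μ = muZero n k α := by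
  classical
  refine ⟨fun α hα => muZero_prob hk α hα, ?_, ?_⟩
  · intro α β hα hβ
    by_cases hab : α = β
    · subst hab; rfl
    · have h1 : α ∩ β ⊆ α := Finset.inter_subset_left
      have h2 : α ∩ β ⊆ β := Finset.inter_subset_right
      have hne1 : α ∩ β ≠ α := fun h =>
        hab (Finset.eq_of_subset_of_card_le (Finset.inter_eq_left.mp h) (by omega))
      have hne2 : α ∩ β ≠ β := fun h =>
        hab (Finset.eq_of_subset_of_card_le (Finset.inter_eq_right.mp h) (by omega)).symm
      exact (map_muZero hk α (α ∩ β) hα h1 hne1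
          (fun i => Finset.mem_of_mem_inter_left i.2)).trans
        (map_muZero hk β (α ∩ β) hβ h2 hne2
          (fun i => Finset.mem_of_mem_inter_right i.2)).symm
  · rintro ⟨μ, hμp, hμ⟩
    have hnull : ∀ α : Finset (Fin n), α.card = k →
        μ {x : Fin n → Fin k | ¬ (∑ i ∈ α, (x i).val) % k = 1} = 0 := by
      intro α hα
      have hmeas : Measurable (fun (x : Fin n → Fin k) (i : α) => x i) :=
        measurable_of_countable _
      have hBmeas : MeasurableSet {y : (i : α) → Fin k | ¬ (∑ i : α, (y i).val) % k = 1} :=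
        (Set.toFinite _).measurableSet
      have hzero : muZero n k α {y : (i : α) → Fin k | ¬ (∑ i : α, (y i).val) % k = 1} = 0 := by
        rw [muZero_apply, Finset.sum_filter]
        apply Finset.sum_eq_zero
        intro x _
        rw [if_neg]
        rintro ⟨h1, h2⟩
        exact h1 h2
      have hpre : (fun (x : Fin n → Fin k) (i : α) => x i) ⁻¹'
          {y : (i : α) → Fin k | ¬ (∑ i : α, (y i).val) % k = 1}
          = {x : Fin n → Fin k | ¬ (∑ i ∈ α, (x i).val) % k = 1} := by
        ext x
        simp only [Set.mem_preimage, Set.mem_setOf_eq]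
        rw [Finset.sum_coe_sort α (fun i => (x i).val)]
      have hmap : Measure.map (fun (x : Fin n → Fin k) (i : α) => x i) μ
          {y : (i : α) → Fin k | ¬ (∑ i : α, (y i).val) % k = 1} = 0 := by
        rw [hμ α hα]; exact hzero
      rw [Measure.map_apply hmeas hBmeas, hpre] at hmap
      exact hmap
    set Good : Set (Fin n → Fin k) :=
      {x | ∀ α : Finset (Fin n), α.card = k → (∑ i ∈ α, (x i).val) % k = 1} with hGoodDef
    have hGoodc : μ Goodᶜ = 0 := by
      have hsub : Goodᶜ ⊆ ⋃ α : Finset (Fin n),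
          {x : Fin n → Fin k | α.card = k ∧ ¬ (∑ i ∈ α, (x i).val) % k = 1} := by
        intro x hx
        simp only [hGoodDef, Set.mem_compl_iff, Set.mem_setOf_eq, not_forall] at hx
        obtain ⟨α, hα, hcond⟩ := hx
        exact Set.mem_iUnion.2 ⟨α, hα, hcond⟩
      refine measure_mono_null hsub (measure_iUnion_null fun α => ?_)
      by_cases hα : α.card = k
      · exact measure_mono_null (fun x hx => hx.2) (hnull α hα)
      · have : {x : Fin n → Fin k | α.card = k ∧ ¬ (∑ i ∈ α, (x i).val) % k = 1} = ∅ := by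
          ext x; simp [hα]
        simp [this]
    have hGood : Good.Nonempty := by
      apply nonempty_of_measure_ne_zero (μ := μ)
      intro h0
      have hh := measure_add_measure_compl (μ := μ) ((Set.toFinite Good).measurableSet)
      rw [h0, hGoodc, add_zero, measure_univ] at hh
      exact zero_ne_one hh
    obtain ⟨x, hx⟩ := hGood
    haveI : Fact (1 < k) := ⟨hk⟩
    have hcast : ∀ α : Finset (Fin n), α.card = k →
        ∑ i ∈ α, (((x i).val : ℕ) : ZMod k) = 1 := by
      intro α hα
      have hx' := hx α hα
      rw [show (1 : ZMod k) = ((1 : ℕ) : ZMod k) by simp, ← Nat.cast_sum,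
        ZMod.natCast_eq_natCast_iff', Nat.mod_eq_of_lt hk]
      exact hx'
    obtain ⟨α0, hα0sub, hα0⟩ := Finset.exists_subset_card_eq
      (show k ≤ (Finset.univ : Finset (Fin n)).card by
        rw [Finset.card_univ, Fintype.card_fin]; omega)
    obtain ⟨j, hj⟩ : ∃ j : Fin n, j ∉ α0 := by
      by_contra h
      push_neg at h
      have hle : (Finset.univ : Finset (Fin n)).card ≤ α0.card :=
        Finset.card_le_card fun i _ => h i
      rw [Finset.card_univ, Fintype.card_fin, hα0] at hle
      omega
    have heq : ∀ i ∈ α0, (((x i).val : ℕ) : ZMod k) = (((x j).val : ℕ) : ZMod k) := by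
      intro i hi
      have hins : j ∉ α0.erase i := fun h => hj (Finset.mem_of_mem_erase h)
      have hcard' : (insert j (α0.erase i)).card = k := by
        rw [Finset.card_insert_of_notMem hins, Finset.card_erase_of_mem hi, hα0]
        omega
      have h1 := hcast α0 hα0
      have h2 := hcast _ hcard'
      rw [Finset.sum_insert hins] at h2
      rw [← Finset.add_sum_erase _ _ hi] at h1
      linear_combination h1 - h2
    have h1 := hcast α0 hα0
    rw [Finset.sum_congr rfl heq, Finset.sum_const, hα0, nsmul_eq_mul,
      ZMod.natCast_self, zero_mul] at h1
    exact one_ne_zero h1.symm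
end

section
/- Let 1 ≤ k < n. There exist real numbers λ_0, λ_1, ..., λ_k, depending only on n and k, with the following property. Let X_1, ..., X_n be measurable spaces, let {μ_α}, indexed by subsets α ⊆ {1,...,n} of size k, be a consistent family of probability measures on the spaces X_α, and let ν_1, ..., ν_n be arbitrary probability measures on X_1, ..., X_n. For every subset β of size t ≤ k define μ_β = (pr_β)_*μ_α for any α ⊇ β of size k (well defined by consistency), define the extension μ̃_β = μ_β × ∏_{i∉β} ν_i on X = ∏_{i=1}^n X_i, and set μ̃_t = Σ_{|β|=t} μ̃_β. Then the signed measure μ = Σ_{t=0}^k λ_t μ̃_t satisfies (pr_α)_*μ = μ_α for every subset α of size k. -/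
open MeasureTheory
open scoped ENNReal

noncomputable def aSeq (m : ℕ) : ℕ → ℝ
  | 0 => 1
  | (j+1) => -∑ i ∈ (Finset.range (j+1)).attach, aSeq m i.1 * (m.choose (j+1-i.1) : ℝ)
  decreasing_by exact Finset.mem_range.mp i.2

lemma dEq (m r : ℕ) :
    ∑ j ∈ Finset.range (r+1), aSeq m j * (m.choose (r - j) : ℝ) = if r = 0 then 1 else 0 := by
  cases r with
  | zero => simp [aSeq]
  | succ j =>
    rw [Finset.sum_range_succ]
    have ha : aSeq m (j+1) = -∑ i ∈ (Finset.range (j+1)).attach, aSeq m i.1 * (m.choose (j+1-i.1) : ℝ) := by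
      rw [aSeq]
    rw [Finset.sum_attach (Finset.range (j+1)) (fun i => aSeq m i * (m.choose (j+1-i) : ℝ))] at ha
    simp only [Nat.sub_self, Nat.choose_zero_right, Nat.cast_one, mul_one]
    rw [ha]
    simp

lemma coefEq (m k s : ℕ) (hs : s ≤ k) :
    ∑ t ∈ Finset.range (k+1), aSeq m (k - t) * (if s ≤ t then (m.choose (t - s) : ℝ) else 0)
      = if s = k then 1 else 0 := by
  have h1 : ∀ t, aSeq m (k - t) * (if s ≤ t then (m.choose (t - s) : ℝ) else 0)
      = if s ≤ t then aSeq m (k - t) * (m.choose (t - s) : ℝ) else 0 := by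
    intro t; split <;> simp
  simp only [h1]
  rw [← Finset.sum_filter]
  have h2 : (Finset.range (k+1)).filter (fun t => s ≤ t) = Finset.Icc s k := by
    ext t; simp [Nat.lt_succ_iff]; omega
  rw [h2]
  have hre : ∑ t ∈ Finset.Icc s k, aSeq m (k - t) * (m.choose (t - s) : ℝ)
      = ∑ j ∈ Finset.range ((k-s)+1), aSeq m ((k-s) - j) * (m.choose j : ℝ) := by
    refine Finset.sum_nbij' (fun t => t - s) (fun j => s + j) ?_ ?_ ?_ ?_ ?_
    · intro a ha; rw [Finset.mem_Icc] at ha; rw [Finset.mem_range]; omega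
    · intro a ha; rw [Finset.mem_range] at ha; rw [Finset.mem_Icc]; omega
    · intro a ha; rw [Finset.mem_Icc] at ha; omega
    · intro a ha; rw [Finset.mem_range] at ha; omega
    · intro a ha; rw [Finset.mem_Icc] at ha
      have h1 : k - a = (k - s) - (a - s) := by omega
      rw [h1]
  rw [hre]
  have h5 := Finset.sum_range_reflect (fun j => aSeq m j * (m.choose ((k-s) - j) : ℝ)) ((k-s)+1)
  simp only [Nat.add_sub_cancel] at h5
  have h6 : ∀ j ∈ Finset.range ((k-s)+1),
      aSeq m ((k-s) - j) * (m.choose ((k-s) - ((k-s) - j)) : ℝ)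
        = aSeq m ((k-s) - j) * (m.choose j : ℝ) := by
    intro j hj
    rw [Finset.mem_range] at hj
    have h7 : (k-s) - ((k-s) - j) = j := by omega
    rw [h7]
  rw [← Finset.sum_congr rfl h6, h5, dEq]
  split_ifs with h7 h8 h8 <;> first | rfl | omega

lemma fiber_card {n : ℕ} (α γ : Finset (Fin n)) (hγ : γ ⊆ α) (t : ℕ) :
    ((Finset.powersetCard t (Finset.univ : Finset (Fin n))).filter (fun β => α ∩ β = γ)).card
      = if γ.card ≤ t then (n - α.card).choose (t - γ.card) else 0 := by
  split_ifs with h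
  · have hcompl : (αᶜ : Finset (Fin n)).card = n - α.card := by
      rw [Finset.card_compl, Fintype.card_fin]
    rw [← hcompl, ← Finset.card_powersetCard]
    apply Finset.card_nbij' (fun β => β \ α) (fun δ => γ ∪ δ)
    · intro β hβ
      rw [Finset.mem_coe, Finset.mem_filter, Finset.mem_powersetCard_univ] at hβ
      obtain ⟨hβc, hβγ⟩ := hβ
      rw [Finset.mem_coe, Finset.mem_powersetCard]
      dsimp only
      constructor
      · intro a ha; rw [Finset.mem_sdiff] at ha; simp [ha.2]
      · have h1 : (β \ α).card + (β ∩ α).card = β.card := Finset.card_sdiff_add_card_inter β α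
        rw [Finset.inter_comm] at h1
        rw [hβγ] at h1
        omega
    · intro δ hδ
      rw [Finset.mem_coe, Finset.mem_powersetCard] at hδ
      obtain ⟨hδs, hδc⟩ := hδ
      have hdisj : Disjoint γ δ := by
        apply Finset.disjoint_left.mpr
        intro a haγ haδ
        have := hδs haδ
        simp at this
        exact this (hγ haγ)
      have hαδ : α ∩ δ = ∅ := by
        apply Finset.eq_empty_of_forall_notMem
        intro a ha
        rw [Finset.mem_inter] at ha
        have := hδs ha.2
        simp at this
        exact this ha.1
      rw [Finset.mem_coe, Finset.mem_filter, Finset.mem_powersetCard_univ]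
      constructor
      · rw [Finset.card_union_of_disjoint hdisj, hδc]
        omega
      · rw [Finset.inter_union_distrib_left, hαδ, Finset.union_empty,
          Finset.inter_eq_right.mpr hγ]
    · intro β hβ
      rw [Finset.mem_coe, Finset.mem_filter, Finset.mem_powersetCard_univ] at hβ
      obtain ⟨hβc, hβγ⟩ := hβ
      subst hβγ
      ext a
      simp only [Finset.mem_union, Finset.mem_inter, Finset.mem_sdiff]
      tauto
    · intro δ hδ
      rw [Finset.mem_coe, Finset.mem_powersetCard] at hδ
      obtain ⟨hδs, hδc⟩ := hδ
      ext a
      simp only [Finset.mem_sdiff, Finset.mem_union]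
      constructor
      · rintro ⟨h1 | h1, h2⟩
        · exact absurd (hγ h1) h2
        · exact h1
      · intro h1
        have := hδs h1
        simp at this
        exact ⟨Or.inr h1, this⟩
  · rw [Finset.card_eq_zero, Finset.filter_eq_empty_iff]
    intro β hβ
    rw [Finset.mem_powersetCard_univ] at hβ
    intro hc
    have : γ.card ≤ β.card := by
      rw [← hc]; exact Finset.card_le_card Finset.inter_subset_right
    omega

section MeasAux

variable {n : ℕ} {X : Fin n → Type} [∀ i, MeasurableSpace (X i)]

lemma meas_proj (α : Finset (Fin n)) :
    Measurable (fun (x : ∀ i, X i) (i : α) => x i) :=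
  measurable_pi_lambda _ fun _ => measurable_pi_apply _

lemma meas_proj2 (β γ : Finset (Fin n)) (h : γ ⊆ β) :
    Measurable (fun (x : (i : β) → X i) (i : γ) => x ⟨i.1, h i.2⟩) :=
  measurable_pi_lambda _ fun _ => measurable_pi_apply _

lemma meas_symm (β : Finset (Fin n)) :
    Measurable (Equiv.piEquivPiSubtypeProd (fun i => i ∈ β) X).symm := by
  apply measurable_pi_lambda
  intro i
  simp only [Equiv.piEquivPiSubtypeProd_symm_apply]
  by_cases h : i ∈ β
  · simp only [dif_pos h]; exact (measurable_pi_apply _).comp measurable_fst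
  · simp only [dif_neg h]; exact (measurable_pi_apply _).comp measurable_snd

lemma rect_calc {k : ℕ} (hkn : k ≤ n)
    (μ : (β : Finset (Fin n)) → Measure ((i : β) → X i))
    (ν : ∀ i, Measure (X i)) (hν : ∀ i, IsProbabilityMeasure (ν i))
    (hcons : ∀ (α β : Finset (Fin n)) (_ : α.card = k) (hsub : β ⊆ α),
      μ β = Measure.map (fun (x : (i : α) → X i) (i : β) => x ⟨i.1, hsub i.2⟩) (μ α))
    (α β : Finset (Fin n)) (hβ : β.card ≤ k)
    (s : ∀ i, Set (X i)) (hs : ∀ i, MeasurableSet (s i)) :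
    Measure.map (fun (x : ∀ i, X i) (i : α) => x i)
      (Measure.map (Equiv.piEquivPiSubtypeProd (fun i => i ∈ β) X).symm
        ((μ β).prod (Measure.pi fun i : {x : Fin n // x ∉ β} => ν i.1)))
      (Set.univ.pi fun i : α => s i.1)
    = μ (α ∩ β) (Set.univ.pi fun j : ↥(α ∩ β) => s j.1) * ∏ j ∈ α \ β, ν j (s j) := by
  haveI : ∀ (i : {x : Fin n // x ∉ β}), SigmaFinite (ν i.1) := fun i => by
    haveI := hν i.1; infer_instance
  have hrect : MeasurableSet (Set.univ.pi fun i : α => s i.1) :=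
    MeasurableSet.univ_pi fun i => hs i.1
  rw [Measure.map_apply (meas_proj α) hrect,
    Measure.map_apply (meas_symm β) ((meas_proj α) hrect)]
  -- identify the preimage as a product rectangle
  have hset :
      (Equiv.piEquivPiSubtypeProd (fun i => i ∈ β) X).symm ⁻¹'
        ((fun (x : ∀ i, X i) (i : α) => x i) ⁻¹' (Set.univ.pi fun i : α => s i.1))
      = (Set.univ.pi fun j : β => if (j : Fin n) ∈ α then s j.1 else Set.univ) ×ˢ
        (Set.univ.pi fun j : {x : Fin n // x ∉ β} =>
          if (j : Fin n) ∈ α then s j.1 else Set.univ) := by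
    ext ⟨u, v⟩
    simp only [Set.mem_preimage, Set.mem_pi, Set.mem_univ, forall_true_left, Set.mem_prod,
      Equiv.piEquivPiSubtypeProd_symm_apply]
    constructor
    · intro h
      constructor
      · intro j
        by_cases hjα : (j : Fin n) ∈ α
        · rw [if_pos hjα]
          have := h ⟨j.1, hjα⟩
          rwa [dif_pos j.2] at this
        · rw [if_neg hjα]; trivial
      · intro j
        by_cases hjα : (j : Fin n) ∈ α
        · rw [if_pos hjα]
          have := h ⟨j.1, hjα⟩
          rwa [dif_neg j.2] at this
        · rw [if_neg hjα]; trivial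
    · rintro ⟨h1, h2⟩ i
      by_cases hib : (i : Fin n) ∈ β
      · rw [dif_pos hib]
        have := h1 ⟨i.1, hib⟩
        rwa [if_pos i.2] at this
      · rw [dif_neg hib]
        have := h2 ⟨i.1, hib⟩
        rwa [if_pos i.2] at this
  rw [hset, Measure.prod_prod]
  congr 1
  -- first factor
  · have hsub : α ∩ β ⊆ β := Finset.inter_subset_right
    obtain ⟨δ, hβδ, hδ⟩ := Finset.exists_superset_card_eq hβ (by simpa using hkn)
    have hcons2 : μ (α ∩ β) = Measure.map
        (fun (x : (i : β) → X i) (i : ↥(α ∩ β)) => x ⟨i.1, hsub i.2⟩) (μ β) := by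
      rw [hcons δ β hδ hβδ, hcons δ (α ∩ β) hδ (hsub.trans hβδ),
        Measure.map_map (meas_proj2 _ _ hsub) (meas_proj2 _ _ hβδ)]
      rfl
    rw [hcons2, Measure.map_apply (meas_proj2 _ _ hsub)
      (MeasurableSet.univ_pi fun j => hs j.1)]
    congr 1
    ext x
    simp only [Set.mem_preimage, Set.mem_pi, Set.mem_univ, forall_true_left]
    constructor
    · intro h j
      have := h ⟨j.1, (Finset.mem_inter.mp j.2).2⟩
      rwa [if_pos (Finset.mem_inter.mp j.2).1] at this
    · intro h j
      by_cases hjα : (j : Fin n) ∈ α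
      · rw [if_pos hjα]
        exact h ⟨j.1, Finset.mem_inter.mpr ⟨hjα, j.2⟩⟩
      · rw [if_neg hjα]; trivial
  -- second factor
  · rw [Measure.pi_pi]
    rw [← Finset.prod_subtype (βᶜ : Finset (Fin n)) (by simp)
      (fun j => ν j (if j ∈ α then s j else Set.univ))]
    rw [← Finset.prod_subset (show α \ β ⊆ βᶜ by
        intro a ha; rw [Finset.mem_sdiff] at ha; simp [ha.2])
      (fun x hx hx2 => by
        have : x ∉ α := by
          rw [Finset.mem_compl] at hx
          rw [Finset.mem_sdiff] at hx2
          tauto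
        rw [if_neg this]
        haveI := hν x
        exact measure_univ)]
    apply Finset.prod_congr rfl
    intro j hj
    rw [Finset.mem_sdiff] at hj
    rw [if_pos hj.1]

end MeasAux

section MeasAux2

variable {n : ℕ} {X : Fin n → Type} [∀ i, MeasurableSpace (X i)]

lemma probM {k : ℕ}
    (μ : (β : Finset (Fin n)) → Measure ((i : β) → X i))
    (ν : ∀ i, Measure (X i)) (hν : ∀ i, IsProbabilityMeasure (ν i))
    (hprob : ∀ β : Finset (Fin n), β.card ≤ k → IsProbabilityMeasure (μ β))
    (α β : Finset (Fin n)) (hβ : β.card ≤ k) :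
    IsProbabilityMeasure
      (Measure.map (fun (x : ∀ i, X i) (i : α) => x i)
        (Measure.map (Equiv.piEquivPiSubtypeProd (fun i => i ∈ β) X).symm
          ((μ β).prod (Measure.pi fun i : {x : Fin n // x ∉ β} => ν i.1)))) := by
  haveI := hprob β hβ
  haveI : ∀ (i : {x : Fin n // x ∉ β}), IsProbabilityMeasure (ν i.1) := fun i => hν i.1
  haveI : IsProbabilityMeasure
      ((μ β).prod (Measure.pi fun i : {x : Fin n // x ∉ β} => ν i.1)) := by infer_instance
  haveI := Measure.isProbabilityMeasure_map (μ := (μ β).prod (Measure.pi fun i : {x : Fin n // x ∉ β} => ν i.1))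
    (meas_symm β).aemeasurable
  exact Measure.isProbabilityMeasure_map (meas_proj α).aemeasurable

lemma proj_eq {k : ℕ} (hkn : k ≤ n)
    (μ : (β : Finset (Fin n)) → Measure ((i : β) → X i))
    (ν : ∀ i, Measure (X i)) (hν : ∀ i, IsProbabilityMeasure (ν i))
    (hprob : ∀ β : Finset (Fin n), β.card ≤ k → IsProbabilityMeasure (μ β))
    (hcons : ∀ (α β : Finset (Fin n)) (_ : α.card = k) (hsub : β ⊆ α),
      μ β = Measure.map (fun (x : (i : α) → X i) (i : β) => x ⟨i.1, hsub i.2⟩) (μ α))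
    (α β : Finset (Fin n)) (hβ : β.card ≤ k) :
    Measure.map (fun (x : ∀ i, X i) (i : α) => x i)
      (Measure.map (Equiv.piEquivPiSubtypeProd (fun i => i ∈ β) X).symm
        ((μ β).prod (Measure.pi fun i : {x : Fin n // x ∉ β} => ν i.1)))
    = Measure.map (fun (x : ∀ i, X i) (i : α) => x i)
      (Measure.map (Equiv.piEquivPiSubtypeProd (fun i => i ∈ α ∩ β) X).symm
        ((μ (α ∩ β)).prod
          (Measure.pi fun i : {x : Fin n // x ∉ α ∩ β} => ν i.1))) := by
  haveI := probM μ ν hν hprob α β hβ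
  haveI := probM μ ν hν hprob α (α ∩ β)
    (le_trans (Finset.card_le_card Finset.inter_subset_right) hβ)
  apply ext_of_generate_finite _ generateFrom_pi.symm isPiSystem_pi
  · rintro S ⟨t, ht, rfl⟩
    simp only [Set.mem_univ_pi, Set.mem_setOf_eq] at ht
    classical
    set s : ∀ i, Set (X i) := fun i => if h : i ∈ α then t ⟨i, h⟩ else Set.univ with hsdef
    have hs : ∀ i, MeasurableSet (s i) := by
      intro i
      simp only [hsdef]
      by_cases h : i ∈ α
      · rw [dif_pos h]; exact ht ⟨i, h⟩
      · rw [dif_neg h]; exact MeasurableSet.univ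
    have htp : (fun i : α => s i.1) = t := by
      funext i; simp only [hsdef]; rw [dif_pos i.2]
    rw [← htp, rect_calc hkn μ ν hν hcons α β hβ s hs,
      rect_calc hkn μ ν hν hcons α (α ∩ β)
        (le_trans (Finset.card_le_card Finset.inter_subset_right) hβ) s hs]
    have h1 : α ∩ (α ∩ β) = α ∩ β := by
      rw [← Finset.inter_assoc, Finset.inter_self]
    have h2 : α \ (α ∩ β) = α \ β := by
      ext a; simp only [Finset.mem_sdiff, Finset.mem_inter]; tauto
    rw [h1, h2]
  · simp

lemma proj_top {k : ℕ} (hkn : k ≤ n)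
    (μ : (β : Finset (Fin n)) → Measure ((i : β) → X i))
    (ν : ∀ i, Measure (X i)) (hν : ∀ i, IsProbabilityMeasure (ν i))
    (hprob : ∀ β : Finset (Fin n), β.card ≤ k → IsProbabilityMeasure (μ β))
    (hcons : ∀ (α β : Finset (Fin n)) (_ : α.card = k) (hsub : β ⊆ α),
      μ β = Measure.map (fun (x : (i : α) → X i) (i : β) => x ⟨i.1, hsub i.2⟩) (μ α))
    (α : Finset (Fin n)) (hα : α.card ≤ k) :
    Measure.map (fun (x : ∀ i, X i) (i : α) => x i)
      (Measure.map (Equiv.piEquivPiSubtypeProd (fun i => i ∈ α) X).symm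
        ((μ α).prod (Measure.pi fun i : {x : Fin n // x ∉ α} => ν i.1)))
    = μ α := by
  haveI := probM μ ν hν hprob α α hα
  haveI := hprob α hα
  apply ext_of_generate_finite _ generateFrom_pi.symm isPiSystem_pi
  · rintro S ⟨t, ht, rfl⟩
    simp only [Set.mem_univ_pi, Set.mem_setOf_eq] at ht
    classical
    set s : ∀ i, Set (X i) := fun i => if h : i ∈ α then t ⟨i, h⟩ else Set.univ with hsdef
    have hs : ∀ i, MeasurableSet (s i) := by
      intro i
      simp only [hsdef]
      by_cases h : i ∈ α
      · rw [dif_pos h]; exact ht ⟨i, h⟩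
      · rw [dif_neg h]; exact MeasurableSet.univ
    have htp : (fun i : α => s i.1) = t := by
      funext i; simp only [hsdef]; rw [dif_pos i.2]
    rw [← htp, rect_calc hkn μ ν hν hcons α α hα s hs]
    rw [Finset.sdiff_self, Finset.prod_empty, mul_one, Finset.inter_self]
  · simp

end MeasAux2

/-- there are coefficients `λ_0, …, λ_k`, depending only on `n` and `k`, such that
for any consistent family `{μ_β}` (given for all `β` with `|β| ≤ k`, compatible under
projections) and any probability measures `ν_i`, the signed measure
`μ = Σ_{t=0}^k λ_t μ̃_t`, where `μ̃_t = Σ_{|β|=t} μ_β × ∏_{i ∉ β} ν_i`, has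
`(pr_α)_* μ = μ_α` for every `α` of cardinality `k`, i.e. the signed combination of the
pushforwards agrees with `μ_α` on every measurable set. -/
theorem statement1 (n k : ℕ) (hk1 : 1 ≤ k) (hkn : k < n) :
    ∃ lam : ℕ → ℝ,
      ∀ (X : Fin n → Type) [inst : ∀ i, MeasurableSpace (X i)]
        (μ : (β : Finset (Fin n)) → Measure ((i : β) → X i))
        (ν : ∀ i, Measure (X i)),
        (∀ i, IsProbabilityMeasure (ν i)) →
        (∀ β : Finset (Fin n), β.card ≤ k → IsProbabilityMeasure (μ β)) →
        (∀ (α β : Finset (Fin n)) (_ : α.card = k) (hsub : β ⊆ α),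
          μ β = Measure.map
            (fun (x : (i : α) → X i) (i : β) => x ⟨i.1, hsub i.2⟩) (μ α)) →
        ∀ α : Finset (Fin n), α.card = k →
          ∀ A : Set ((i : α) → X i), MeasurableSet A →
            ∑ t ∈ Finset.range (k + 1), lam t *
              (∑ β ∈ Finset.powersetCard t (Finset.univ : Finset (Fin n)),
                (Measure.map (Equiv.piEquivPiSubtypeProd (fun i => i ∈ β) X).symm
                    ((μ β).prod (Measure.pi fun i : {x : Fin n // x ∉ β} => ν i.1)))
                  ((fun (x : ∀ i, X i) (i : α) => x i) ⁻¹' A)).toReal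
            = ((μ α) A).toReal := by
  refine ⟨fun t => aSeq (n - k) (k - t), ?_⟩
  intro X inst μ ν hν hprob hcons α hα A hA
  classical
  have hkn' : k ≤ n := hkn.le
  set g : Finset (Fin n) → ℝ := fun γ =>
    ((Measure.map (fun (x : ∀ i, X i) (i : α) => x i)
      (Measure.map (Equiv.piEquivPiSubtypeProd (fun i => i ∈ γ) X).symm
        ((μ γ).prod (Measure.pi fun i : {x : Fin n // x ∉ γ} => ν i.1)))) A).toReal
    with hgdef
  -- Step 1: rewrite each inner sum
  have step1 : ∀ t ∈ Finset.range (k + 1),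
      (∑ β ∈ Finset.powersetCard t (Finset.univ : Finset (Fin n)),
        (Measure.map (Equiv.piEquivPiSubtypeProd (fun i => i ∈ β) X).symm
            ((μ β).prod (Measure.pi fun i : {x : Fin n // x ∉ β} => ν i.1)))
          ((fun (x : ∀ i, X i) (i : α) => x i) ⁻¹' A)).toReal
      = ∑ β ∈ Finset.powersetCard t (Finset.univ : Finset (Fin n)), g (α ∩ β) := by
    intro t ht
    rw [Finset.mem_range, Nat.lt_succ_iff] at ht
    rw [ENNReal.toReal_sum]
    · apply Finset.sum_congr rfl
      intro β hβ
      rw [Finset.mem_powersetCard_univ] at hβ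
      have hβk : β.card ≤ k := hβ ▸ ht
      have h1 : (Measure.map (Equiv.piEquivPiSubtypeProd (fun i => i ∈ β) X).symm
            ((μ β).prod (Measure.pi fun i : {x : Fin n // x ∉ β} => ν i.1)))
          ((fun (x : ∀ i, X i) (i : α) => x i) ⁻¹' A)
          = (Measure.map (fun (x : ∀ i, X i) (i : α) => x i)
              (Measure.map (Equiv.piEquivPiSubtypeProd (fun i => i ∈ β) X).symm
                ((μ β).prod (Measure.pi fun i : {x : Fin n // x ∉ β} => ν i.1)))) A := by
        rw [Measure.map_apply (meas_proj α) hA]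
      rw [hgdef]
      rw [h1, proj_eq hkn' μ ν hν hprob hcons α β hβk]
    · intro β hβ
      rw [Finset.mem_powersetCard_univ] at hβ
      haveI := hprob β (hβ ▸ ht)
      haveI : ∀ (i : {x : Fin n // x ∉ β}), IsProbabilityMeasure (ν i.1) := fun i => hν i.1
      haveI : IsProbabilityMeasure
          ((μ β).prod (Measure.pi fun i : {x : Fin n // x ∉ β} => ν i.1)) := by infer_instance
      haveI := Measure.isProbabilityMeasure_map
        (μ := (μ β).prod (Measure.pi fun i : {x : Fin n // x ∉ β} => ν i.1))
        (meas_symm β).aemeasurable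
      exact measure_ne_top _ _
  rw [Finset.sum_congr rfl fun t ht => by rw [step1 t ht]]
  -- Step 2: group by γ = α ∩ β
  have step2 : ∀ t, ∑ β ∈ Finset.powersetCard t (Finset.univ : Finset (Fin n)), g (α ∩ β)
      = ∑ γ ∈ α.powerset,
          (if γ.card ≤ t then ((n - k).choose (t - γ.card) : ℝ) else 0) * g γ := by
    intro t
    have himg : Finset.image (fun β => α ∩ β)
        (Finset.powersetCard t (Finset.univ : Finset (Fin n))) ⊆ α.powerset := by
      intro γ hγ
      rw [Finset.mem_image] at hγ
      obtain ⟨β, _, rfl⟩ := hγ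
      exact Finset.mem_powerset.mpr Finset.inter_subset_left
    rw [Finset.sum_comp g (fun β => α ∩ β),
      Finset.sum_subset himg (fun γ _ hγim => by
        have hc : (Finset.filter (fun β => α ∩ β = γ)
            (Finset.powersetCard t (Finset.univ : Finset (Fin n)))).card = 0 := by
          rw [Finset.card_eq_zero, Finset.filter_eq_empty_iff]
          intro β hβ hcon
          exact hγim (Finset.mem_image.mpr ⟨β, hβ, hcon⟩)
        rw [hc, zero_smul])]
    apply Finset.sum_congr rfl
    intro γ hγ
    rw [Finset.mem_powerset] at hγ
    rw [fiber_card α γ hγ t, hα]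
    split_ifs with h
    · rw [nsmul_eq_mul]
    · simp
  rw [Finset.sum_congr rfl fun t _ => by rw [step2 t]]
  -- Step 3: swap sums and apply the coefficient identity
  have hswap : ∑ t ∈ Finset.range (k + 1), aSeq (n - k) (k - t) *
        ∑ γ ∈ α.powerset,
          (if γ.card ≤ t then ((n - k).choose (t - γ.card) : ℝ) else 0) * g γ
      = ∑ γ ∈ α.powerset,
          (∑ t ∈ Finset.range (k + 1), aSeq (n - k) (k - t) *
            (if γ.card ≤ t then ((n - k).choose (t - γ.card) : ℝ) else 0)) * g γ := by
    simp_rw [Finset.mul_sum]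
    rw [Finset.sum_comm]
    apply Finset.sum_congr rfl
    intro γ _
    rw [Finset.sum_mul]
    apply Finset.sum_congr rfl
    intro t _
    ring
  rw [hswap]
  have hcoef : ∀ γ ∈ α.powerset,
      (∑ t ∈ Finset.range (k + 1), aSeq (n - k) (k - t) *
        (if γ.card ≤ t then ((n - k).choose (t - γ.card) : ℝ) else 0)) * g γ
      = (if γ.card = k then 1 else 0) * g γ := by
    intro γ hγ
    rw [Finset.mem_powerset] at hγ
    have hγk : γ.card ≤ k := hα ▸ Finset.card_le_card hγ
    rw [coefEq (n - k) k γ.card hγk]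
  rw [Finset.sum_congr rfl hcoef]
  rw [Finset.sum_eq_single_of_mem α (Finset.mem_powerset_self α)
    (fun γ hγ hne => by
      rw [Finset.mem_powerset] at hγ
      have : γ.card ≠ k := by
        intro hc
        exact hne (Finset.eq_of_subset_of_card_le hγ (hα ▸ hc ▸ le_refl _))
      rw [if_neg this, zero_mul])]
  rw [if_pos hα, one_mul, hgdef]
  dsimp only
  rw [proj_top hkn' μ ν hν hprob hcons α (le_of_eq hα)]
end

section
/- For all natural numbers 1 ≤ k < n there exists a constant λ_{nk} > 1 with the following property. Let X_1, ..., X_n be measurable spaces, {μ_α} a consistent family of probability measures on the spaces X_α (α ⊆ {1,...,n}, |α| = k), and ν_1, ..., ν_n probability measures on X_1, ..., X_n. Suppose every μ_α is absolutely continuous with respect to ν_α = ∏_{i∈α} ν_i with density ρ_α, and there exist constants 0 < m ≤ M such that m ≤ ρ_α ≤ M holds ν_α-almost everywhere for all α. If M/m ≤ λ_{nk}, then the set Π(μ_α) of uniting measures is nonempty. -/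
open MeasureTheory
open scoped ENNReal

namespace Stmt3

open Finset

variable {ι : Type*} [DecidableEq ι]

lemma neg_one_pow_sub {a b : ℕ} (h : b ≤ a) : ((-1:ℝ))^(a-b) = (-1)^a * (-1)^b := by
  have : a = (a - b) + b := by omega
  rw [this, pow_add, Nat.add_sub_cancel]
  have hb : ((-1:ℝ))^b * (-1)^b = 1 := by
    rw [← pow_add]
    simp [pow_add, ← two_mul, pow_mul]
  rw [mul_assoc, hb, mul_one]

/-- split a powerset sum along a set β -/
lemma sum_powerset_split (γ β : Finset ι) (f : Finset ι → ℝ) :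
    ∑ δ ∈ γ.powerset, f δ
      = ∑ a ∈ (γ ∩ β).powerset, ∑ b ∈ (γ \ β).powerset, f (a ∪ b) := by
  rw [← Finset.sum_product']
  refine Finset.sum_nbij' (fun δ => (δ ∩ β, δ \ β)) (fun p => p.1 ∪ p.2) ?_ ?_ ?_ ?_ ?_
  · intro δ hδ
    simp only [Finset.mem_powerset] at hδ
    simp only [Finset.mem_product, Finset.mem_powerset]
    exact ⟨inter_subset_inter hδ Subset.rfl, sdiff_subset_sdiff hδ Subset.rfl⟩
  · intro p hp
    simp only [Finset.mem_product, Finset.mem_powerset] at hp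
    simp only [Finset.mem_powerset]
    exact Finset.union_subset (hp.1.trans inter_subset_left) (hp.2.trans sdiff_subset)
  · intro δ hδ
    ext x; simp only [Finset.mem_union, Finset.mem_inter, Finset.mem_sdiff]; tauto
  · intro p hp
    simp only [Finset.mem_product, Finset.mem_powerset] at hp
    have h1 : p.1 ∩ β = p.1 := by
      apply Finset.inter_eq_left.2
      exact hp.1.trans inter_subset_right
    have h2 : p.2 ∩ β = ∅ := by
      apply Finset.eq_empty_of_forall_notMem
      intro x hx
      simp only [Finset.mem_inter] at hx
      have := hp.2 hx.1
      simp only [Finset.mem_sdiff] at this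
      exact this.2 hx.2
    have h3 : p.1 \ β = ∅ := by
      apply Finset.eq_empty_of_forall_notMem
      intro x hx
      simp only [Finset.mem_sdiff] at hx
      exact hx.2 (inter_subset_right (hp.1 hx.1))
    have h4 : p.2 \ β = p.2 := by
      apply Finset.sdiff_eq_self_of_disjoint
      rw [Finset.disjoint_left]
      intro x hx
      have := hp.2 hx
      simp only [Finset.mem_sdiff] at this
      exact this.2
    ext <;> simp [Finset.union_inter_distrib_right, Finset.union_sdiff_distrib, h1, h2, h3, h4]
  · intro δ hδ
    congr 1
    ext x; simp only [Finset.mem_union, Finset.mem_inter, Finset.mem_sdiff]; tauto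

lemma card_un {a b : Finset ι} (h : Disjoint a b) : (a ∪ b).card = a.card + b.card :=
  Finset.card_union_of_disjoint h

/-- the inner sum vanishes when γ ⊄ β -/
lemma inner_vanish (γ β : Finset ι) (T : Finset ι → ℝ) (h : ¬ γ ⊆ β) :
    ∑ δ ∈ γ.powerset, (-1:ℝ)^(δ.card) * T (δ ∩ β) = 0 := by
  rw [sum_powerset_split γ β]
  have key : ∀ a ∈ (γ ∩ β).powerset, ∀ b ∈ (γ \ β).powerset,
      (-1:ℝ)^((a ∪ b).card) * T ((a ∪ b) ∩ β) = ((-1:ℝ)^a.card * T a) * (-1:ℝ)^b.card := by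
    intro a ha b hb
    simp only [Finset.mem_powerset] at ha hb
    have hd : Disjoint a b := by
      refine Finset.disjoint_left.2 fun x hxa hxb => ?_
      have h1 := ha hxa
      have h2 := hb hxb
      simp only [Finset.mem_inter, Finset.mem_sdiff] at h1 h2
      exact h2.2 h1.2
    have hab : (a ∪ b) ∩ β = a := by
      have h1 : a ∩ β = a := Finset.inter_eq_left.2 (ha.trans inter_subset_right)
      have h2 : b ∩ β = ∅ := by
        apply Finset.eq_empty_of_forall_notMem
        intro x hx
        simp only [Finset.mem_inter] at hx
        have := hb hx.1
        simp only [Finset.mem_sdiff] at this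
        exact this.2 hx.2
      rw [Finset.union_inter_distrib_right, h1, h2, Finset.union_empty]
    rw [card_un hd, hab, pow_add]
    ring
  rw [Finset.sum_congr rfl fun a ha => Finset.sum_congr rfl fun b hb => key a ha b hb]
  have : ∀ a ∈ (γ ∩ β).powerset,
      ∑ b ∈ (γ \ β).powerset, ((-1:ℝ)^a.card * T a) * (-1:ℝ)^b.card = 0 := by
    intro a _
    rw [← Finset.mul_sum]
    have hz : ∑ b ∈ (γ \ β).powerset, (-1:ℝ)^b.card = 0 := by
      have := Finset.sum_powerset_neg_one_pow_card_of_nonempty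
        (x := γ \ β) (Finset.sdiff_nonempty.2 h)
      have := congrArg (fun z : ℤ => (z : ℝ)) this
      push_cast at this
      simpa using this
    rw [hz, mul_zero]
  rw [Finset.sum_congr rfl this, Finset.sum_const, smul_zero]


/-- Möbius inversion over powersets -/
lemma mobius (β : Finset ι) (T : Finset ι → ℝ) :
    ∑ γ ∈ β.powerset, ∑ δ ∈ γ.powerset, (-1:ℝ)^(γ.card - δ.card) * T δ = T β := by
  have signrw : ∀ γ ∈ β.powerset, ∀ δ ∈ γ.powerset,
      (-1:ℝ)^(γ.card - δ.card) * T δ = (-1:ℝ)^γ.card * ((-1:ℝ)^δ.card * T δ) := by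
    intro γ hγ δ hδ
    simp only [Finset.mem_powerset] at hδ
    rw [neg_one_pow_sub (Finset.card_le_card hδ), mul_assoc]
  rw [Finset.sum_congr rfl fun γ hγ => Finset.sum_congr rfl (signrw γ hγ)]
  -- swap the sums
  rw [Finset.sum_comm' (t' := β.powerset) (s' := fun δ => (β.powerset).filter (fun γ => δ ⊆ γ))
    (by
      intro γ δ
      simp only [Finset.mem_powerset, Finset.mem_filter]
      tauto)]
  -- inner sum over γ with δ ⊆ γ ⊆ β
  have inner : ∀ δ ∈ β.powerset,
      ∑ γ ∈ (β.powerset).filter (fun γ => δ ⊆ γ), (-1:ℝ)^γ.card * ((-1:ℝ)^δ.card * T δ)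
        = (if β \ δ = ∅ then (1:ℝ) else 0) * T δ := by
    intro δ hδ
    simp only [Finset.mem_powerset] at hδ
    have breix : ∑ γ ∈ (β.powerset).filter (fun γ => δ ⊆ γ), (-1:ℝ)^γ.card
        = ∑ η ∈ (β \ δ).powerset, (-1:ℝ)^(δ.card + η.card) := by
      refine Finset.sum_nbij' (fun γ => γ \ δ) (fun η => δ ∪ η) ?_ ?_ ?_ ?_ ?_
      · intro γ hγ
        simp only [Finset.mem_filter, Finset.mem_powerset] at hγ ⊢
        exact sdiff_subset_sdiff hγ.1 Subset.rfl
      · intro η hη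
        simp only [Finset.mem_powerset] at hη
        simp only [Finset.mem_filter, Finset.mem_powerset]
        exact ⟨Finset.union_subset hδ (hη.trans sdiff_subset), Finset.subset_union_left⟩
      · intro γ hγ
        simp only [Finset.mem_filter, Finset.mem_powerset] at hγ
        ext x; simp only [Finset.mem_union, Finset.mem_sdiff]
        constructor
        · rintro (hx | ⟨hx, _⟩) <;> [exact hγ.2 hx; exact hx]
        · intro hx
          by_cases hxδ : x ∈ δ <;> simp [hx, hxδ]
      · intro η hη
        simp only [Finset.mem_powerset] at hη
        ext x; simp only [Finset.mem_union, Finset.mem_sdiff]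
        constructor
        · rintro ⟨hx | hx, hxδ⟩; · exact absurd hx hxδ
          exact hx
        · intro hx
          refine ⟨Or.inr hx, ?_⟩
          have := hη hx
          simp only [Finset.mem_sdiff] at this
          exact this.2
      · intro γ hγ
        simp only [Finset.mem_filter, Finset.mem_powerset] at hγ
        have huni : δ ∪ (γ \ δ) = γ := by
          ext x; simp only [Finset.mem_union, Finset.mem_sdiff]
          constructor
          · rintro (hx | ⟨hx, _⟩); · exact hγ.2 hx
            · exact hx
          · intro hx; by_cases hxδ : x ∈ δ <;> simp [hx, hxδ]
        have hdisj : Disjoint δ (γ \ δ) := Finset.disjoint_sdiff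
        have hcard : γ.card = δ.card + (γ \ δ).card := by
          conv_lhs => rw [← huni]
          rw [card_un hdisj]
        rw [hcard]
    rw [← Finset.sum_mul, breix]
    have hpull : ∑ η ∈ (β \ δ).powerset, (-1:ℝ)^(δ.card + η.card)
        = (-1:ℝ)^δ.card * ∑ η ∈ (β \ δ).powerset, (-1:ℝ)^η.card := by
      rw [Finset.mul_sum]
      exact Finset.sum_congr rfl fun η _ => by rw [pow_add]
    have hz : ∑ η ∈ (β \ δ).powerset, (-1:ℝ)^η.card = if β \ δ = ∅ then (1:ℝ) else 0 := by
      have := Finset.sum_powerset_neg_one_pow_card (x := β \ δ)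
      have := congrArg (fun z : ℤ => (z : ℝ)) this
      push_cast at this
      exact this
    rw [hpull, hz]
    have hsq : (-1:ℝ)^δ.card * (-1:ℝ)^δ.card = 1 := by
      rw [← pow_add]
      simp [← two_mul, pow_mul]
    by_cases hbd : β \ δ = ∅
    · rw [if_pos hbd, mul_one]
      calc (-1:ℝ)^δ.card * ((-1:ℝ)^δ.card * T δ)
          = ((-1:ℝ)^δ.card * (-1:ℝ)^δ.card) * T δ := by ring
        _ = 1 * T δ := by rw [hsq]
    · rw [if_neg hbd]
      simp
  rw [Finset.sum_congr rfl inner]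
  rw [Finset.sum_eq_single β]
  · simp
  · intro δ hδ hne
    simp only [Finset.mem_powerset] at hδ
    have : β \ δ ≠ ∅ := by
      intro hc
      exact hne (Finset.Subset.antisymm hδ (by
        intro x hx
        by_contra hxd
        exact absurd (Finset.mem_sdiff.2 ⟨hx, hxd⟩) (by simp [hc])))
    simp [this]
  · intro h
    exact absurd (Finset.mem_powerset.2 Subset.rfl) h

/-- The main combinatorial identity. -/
lemma combC {n k : ℕ} (β : Finset (Fin n)) (hβ : β.card = k) (T : Finset (Fin n) → ℝ) :
    ∑ γ ∈ (Finset.univ : Finset (Fin n)).powerset.filter (fun γ => γ.card ≤ k),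
      ∑ δ ∈ γ.powerset, (-1:ℝ)^(γ.card - δ.card) * T (δ ∩ β) = T β := by
  classical
  set S := (Finset.univ : Finset (Fin n)).powerset.filter (fun γ => γ.card ≤ k) with hS
  -- terms with γ ⊄ β vanish
  have hvan : ∀ γ ∈ S, ¬ γ ⊆ β →
      ∑ δ ∈ γ.powerset, (-1:ℝ)^(γ.card - δ.card) * T (δ ∩ β) = 0 := by
    intro γ hγ hnsub
    have : ∀ δ ∈ γ.powerset, (-1:ℝ)^(γ.card - δ.card) * T (δ ∩ β)
        = (-1:ℝ)^γ.card * ((-1:ℝ)^δ.card * T (δ ∩ β)) := by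
      intro δ hδ
      simp only [Finset.mem_powerset] at hδ
      rw [neg_one_pow_sub (Finset.card_le_card hδ), mul_assoc]
    rw [Finset.sum_congr rfl this, ← Finset.mul_sum, inner_vanish γ β T hnsub, mul_zero]
  have hsplit : ∑ γ ∈ S, ∑ δ ∈ γ.powerset, (-1:ℝ)^(γ.card - δ.card) * T (δ ∩ β)
      = ∑ γ ∈ S.filter (fun γ => γ ⊆ β), ∑ δ ∈ γ.powerset, (-1:ℝ)^(γ.card - δ.card) * T (δ ∩ β) :=
    (Finset.sum_filter_of_ne (fun γ hγ hne => by
      by_contra hnsub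
      exact hne (hvan γ hγ hnsub))).symm
  rw [hsplit]
  have hSβ : S.filter (fun γ => γ ⊆ β) = β.powerset := by
    ext γ
    simp only [hS, Finset.mem_filter, Finset.mem_powerset]
    constructor
    · rintro ⟨_, h⟩; exact h
    · intro h
      exact ⟨⟨Finset.subset_univ γ, hβ ▸ Finset.card_le_card h⟩, h⟩
  rw [hSβ]
  have : ∀ γ ∈ β.powerset, ∀ δ ∈ γ.powerset, (-1:ℝ)^(γ.card - δ.card) * T (δ ∩ β)
      = (-1:ℝ)^(γ.card - δ.card) * T δ := by
    intro γ hγ δ hδ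
    simp only [Finset.mem_powerset] at hγ hδ
    rw [Finset.inter_eq_left.2 (hδ.trans hγ)]
  rw [Finset.sum_congr rfl fun γ hγ => Finset.sum_congr rfl (this γ hγ)]
  exact mobius β T

/-- sum of all the signs is 1 -/
lemma combOne {n k : ℕ} :
    ∑ γ ∈ (Finset.univ : Finset (Fin n)).powerset.filter (fun γ => γ.card ≤ k),
      ∑ δ ∈ γ.powerset, (-1:ℝ)^(γ.card - δ.card) = 1 := by
  classical
  have inner : ∀ γ : Finset (Fin n),
      ∑ δ ∈ γ.powerset, (-1:ℝ)^(γ.card - δ.card) = if γ = ∅ then 1 else 0 := by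
    intro γ
    have : ∀ δ ∈ γ.powerset, (-1:ℝ)^(γ.card - δ.card) = (-1:ℝ)^γ.card * (-1:ℝ)^δ.card := by
      intro δ hδ
      simp only [Finset.mem_powerset] at hδ
      rw [neg_one_pow_sub (Finset.card_le_card hδ)]
    rw [Finset.sum_congr rfl this, ← Finset.mul_sum]
    have hz : ∑ δ ∈ γ.powerset, (-1:ℝ)^δ.card = if γ = ∅ then 1 else 0 := by
      have := Finset.sum_powerset_neg_one_pow_card (x := γ)
      have := congrArg (fun z : ℤ => (z : ℝ)) this
      push_cast at this
      exact this
    rw [hz]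
    by_cases h : γ = ∅ <;> simp [h]
  rw [Finset.sum_congr rfl fun γ _ => inner γ]
  rw [Finset.sum_eq_single (∅ : Finset (Fin n)) (fun γ _ h => if_neg h)
    (fun h => absurd (by simp : (∅ : Finset (Fin n)) ∈ (Finset.univ : Finset (Fin n)).powerset.filter (fun γ => γ.card ≤ k)) h)]
  simp

section Meas

variable {n : ℕ} {X : Fin n → Type} [∀ i, MeasurableSpace (X i)]

/-- projection between coordinate subproducts -/
def pr {σ τ : Finset (Fin n)} (h : σ ⊆ τ) (x : ∀ i : τ, X i) (j : σ) : X j :=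
  x ⟨j.1, h j.2⟩

/-- projection from the full product -/
def prU (β : Finset (Fin n)) (x : ∀ i, X i) (j : β) : X j := x j.1

/-- gluing map -/
def gl {σ τ : Finset (Fin n)} (h : σ ⊆ τ)
    (z : (∀ i : σ, X i) × (∀ i : ((τ \ σ) : Finset (Fin n)), X i)) (i : τ) : X i :=
  if hh : i.1 ∈ σ then z.1 ⟨i.1, hh⟩ else z.2 ⟨i.1, Finset.mem_sdiff.2 ⟨i.2, hh⟩⟩

/-- gluing map onto the full product -/
def glU (β : Finset (Fin n))
    (z : (∀ i : β, X i) × (∀ i : ((Finset.univ \ β) : Finset (Fin n)), X i)) (i : Fin n) : X i :=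
  if hh : i ∈ β then z.1 ⟨i, hh⟩ else z.2 ⟨i, Finset.mem_sdiff.2 ⟨Finset.mem_univ i, hh⟩⟩

lemma measurable_pr {σ τ : Finset (Fin n)} (h : σ ⊆ τ) : Measurable (pr (X := X) h) :=
  measurable_pi_lambda _ fun _ => measurable_pi_apply _

lemma measurable_prU (β : Finset (Fin n)) : Measurable (prU (X := X) β) :=
  measurable_pi_lambda _ fun _ => measurable_pi_apply _

lemma measurable_gl {σ τ : Finset (Fin n)} (h : σ ⊆ τ) : Measurable (gl (X := X) h) := by
  apply measurable_pi_lambda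
  intro i
  by_cases hh : i.1 ∈ σ
  · simp only [gl, dif_pos hh]
    exact (measurable_pi_apply _).comp measurable_fst
  · simp only [gl, dif_neg hh]
    exact (measurable_pi_apply _).comp measurable_snd

lemma measurable_glU (β : Finset (Fin n)) : Measurable (glU (X := X) β) := by
  apply measurable_pi_lambda
  intro i
  by_cases hh : i ∈ β
  · simp only [glU, dif_pos hh]
    exact (measurable_pi_apply _).comp measurable_fst
  · simp only [glU, dif_neg hh]
    exact (measurable_pi_apply _).comp measurable_snd

variable (ν : ∀ i, Measure (X i)) [∀ i, IsProbabilityMeasure (ν i)]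

lemma mp_pr {σ τ : Finset (Fin n)} (h : σ ⊆ τ) :
    MeasurePreserving (pr (X := X) h)
      (Measure.pi fun i : τ => ν i) (Measure.pi fun i : σ => ν i) := by
  refine ⟨measurable_pr h, ?_⟩
  refine (Measure.pi_eq fun s hs => ?_).symm
  rw [Measure.map_apply (measurable_pr h) (MeasurableSet.univ_pi hs)]
  have hpre : pr (X := X) h ⁻¹' (Set.univ.pi s)
      = Set.univ.pi (fun i : τ =>
          if hh : i.1 ∈ σ then s ⟨i.1, hh⟩ else Set.univ) := by
    ext x
    simp only [Set.mem_preimage, Set.mem_pi, Set.mem_univ, true_implies]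
    constructor
    · intro hx i
      by_cases hh : i.1 ∈ σ
      · simp only [dif_pos hh]
        exact hx ⟨i.1, hh⟩
      · simp only [dif_neg hh]
        trivial
    · intro hx j
      have := hx ⟨j.1, h j.2⟩
      simp only [dif_pos j.2] at this
      exact this
  rw [hpre, Measure.pi_pi]
  set F : Fin n → ℝ≥0∞ := fun i => if hh : i ∈ σ then ν i (s ⟨i, hh⟩) else 1 with hF
  have h1 : ∀ i : τ, ν i.1 (if hh : i.1 ∈ σ then s ⟨i.1, hh⟩ else Set.univ) = F i.1 := by
    intro i
    by_cases hh : i.1 ∈ σ <;> simp [hF, hh]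
  rw [Finset.prod_congr rfl fun i _ => h1 i]
  have h2 : ∀ j : σ, ν j.1 (s j) = F j.1 := by
    intro j
    simp [hF, j.2]
  rw [Finset.prod_congr rfl fun j _ => h2 j]
  rw [Finset.prod_coe_sort τ F, Finset.prod_coe_sort σ F]
  exact (Finset.prod_subset h (fun i _ hiσ => by simp [hF, hiσ])).symm

lemma mp_prU (β : Finset (Fin n)) :
    MeasurePreserving (prU (X := X) β)
      (Measure.pi ν) (Measure.pi fun i : β => ν i) := by
  refine ⟨measurable_prU β, ?_⟩
  refine (Measure.pi_eq fun s hs => ?_).symm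
  rw [Measure.map_apply (measurable_prU β) (MeasurableSet.univ_pi hs)]
  have hpre : prU (X := X) β ⁻¹' (Set.univ.pi s)
      = Set.univ.pi (fun i : Fin n =>
          if hh : i ∈ β then s ⟨i, hh⟩ else Set.univ) := by
    ext x
    simp only [Set.mem_preimage, Set.mem_pi, Set.mem_univ, true_implies]
    constructor
    · intro hx i
      by_cases hh : i ∈ β
      · simp only [dif_pos hh]
        exact hx ⟨i, hh⟩
      · simp only [dif_neg hh]
        trivial
    · intro hx j
      have := hx j.1
      simp only [dif_pos j.2] at this
      exact this
  rw [hpre, Measure.pi_pi]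
  set F : Fin n → ℝ≥0∞ := fun i => if hh : i ∈ β then ν i (s ⟨i, hh⟩) else 1 with hF
  have h1 : ∀ i : Fin n, ν i (if hh : i ∈ β then s ⟨i, hh⟩ else Set.univ) = F i := by
    intro i
    by_cases hh : i ∈ β <;> simp [hF, hh]
  rw [Finset.prod_congr rfl fun i _ => h1 i]
  have h2 : ∀ j : β, ν j.1 (s j) = F j.1 := by
    intro j
    simp [hF, j.2]
  rw [Finset.prod_congr rfl fun j _ => h2 j]
  rw [Finset.prod_coe_sort β F]
  rw [← Finset.prod_attach Finset.univ F]
  rw [Finset.prod_attach Finset.univ F]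
  exact (Finset.prod_subset (Finset.subset_univ β) (fun i _ hiβ => by simp [hF, hiβ])).symm

lemma mp_gl {σ τ : Finset (Fin n)} (h : σ ⊆ τ) :
    MeasurePreserving (gl (X := X) h)
      ((Measure.pi fun i : σ => ν i).prod (Measure.pi fun i : ((τ \ σ) : Finset (Fin n)) => ν i))
      (Measure.pi fun i : τ => ν i) := by
  refine ⟨measurable_gl h, ?_⟩
  refine (Measure.pi_eq fun s hs => ?_).symm
  rw [Measure.map_apply (measurable_gl h) (MeasurableSet.univ_pi hs)]
  have hpre : gl (X := X) h ⁻¹' (Set.univ.pi s)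
      = (Set.univ.pi fun j : σ => s ⟨j.1, h j.2⟩) ×ˢ
          (Set.univ.pi fun j : ((τ \ σ) : Finset (Fin n)) =>
            s ⟨j.1, (Finset.mem_sdiff.1 j.2).1⟩) := by
    ext z
    simp only [Set.mem_preimage, Set.mem_pi, Set.mem_univ, true_implies, Set.mem_prod]
    constructor
    · intro hz
      constructor
      · intro j
        have := hz ⟨j.1, h j.2⟩
        simpa only [gl, dif_pos j.2] using this
      · intro j
        have hj := Finset.mem_sdiff.1 j.2
        have := hz ⟨j.1, hj.1⟩
        simpa only [gl, dif_neg hj.2] using this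
    · intro hz i
      by_cases hh : i.1 ∈ σ
      · have := hz.1 ⟨i.1, hh⟩
        simpa only [gl, dif_pos hh] using this
      · have := hz.2 ⟨i.1, Finset.mem_sdiff.2 ⟨i.2, hh⟩⟩
        simpa only [gl, dif_neg hh] using this
  rw [hpre, Measure.prod_prod, Measure.pi_pi, Measure.pi_pi]
  set F : Fin n → ℝ≥0∞ := fun i => if hh : i ∈ τ then ν i (s ⟨i, hh⟩) else 1 with hF
  have h1 : ∀ j : σ, ν j.1 (s ⟨j.1, h j.2⟩) = F j.1 := fun j => by simp [hF, h j.2]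
  have h2 : ∀ j : ((τ \ σ) : Finset (Fin n)),
      ν j.1 (s ⟨j.1, (Finset.mem_sdiff.1 j.2).1⟩) = F j.1 := fun j => by
    simp [hF, (Finset.mem_sdiff.1 j.2).1]
  have h3 : ∀ i : τ, ν i.1 (s i) = F i.1 := fun i => by simp [hF, i.2]
  rw [Finset.prod_congr rfl fun j _ => h1 j, Finset.prod_congr rfl fun j _ => h2 j,
    Finset.prod_congr rfl fun i _ => h3 i]
  rw [Finset.prod_coe_sort σ F, Finset.prod_coe_sort _ F, Finset.prod_coe_sort τ F]
  rw [← Finset.prod_union Finset.disjoint_sdiff, Finset.union_sdiff_of_subset h]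

lemma mp_glU (β : Finset (Fin n)) :
    MeasurePreserving (glU (X := X) β)
      ((Measure.pi fun i : β => ν i).prod
        (Measure.pi fun i : ((Finset.univ \ β) : Finset (Fin n)) => ν i))
      (Measure.pi ν) := by
  refine ⟨measurable_glU β, ?_⟩
  refine (Measure.pi_eq fun s hs => ?_).symm
  rw [Measure.map_apply (measurable_glU β) (MeasurableSet.univ_pi hs)]
  have hpre : glU (X := X) β ⁻¹' (Set.univ.pi s)
      = (Set.univ.pi fun j : β => s j.1) ×ˢ
          (Set.univ.pi fun j : ((Finset.univ \ β) : Finset (Fin n)) => s j.1) := by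
    ext z
    simp only [Set.mem_preimage, Set.mem_pi, Set.mem_univ, true_implies, Set.mem_prod]
    constructor
    · intro hz
      constructor
      · intro j
        have := hz j.1
        simpa only [glU, dif_pos j.2] using this
      · intro j
        have hj := Finset.mem_sdiff.1 j.2
        have := hz j.1
        simpa only [glU, dif_neg hj.2] using this
    · intro hz i
      by_cases hh : i ∈ β
      · have := hz.1 ⟨i, hh⟩
        simpa only [glU, dif_pos hh] using this
      · have := hz.2 ⟨i, Finset.mem_sdiff.2 ⟨Finset.mem_univ i, hh⟩⟩
        simpa only [glU, dif_neg hh] using this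
  rw [hpre, Measure.prod_prod, Measure.pi_pi, Measure.pi_pi]
  set F : Fin n → ℝ≥0∞ := fun i => ν i (s i) with hF
  rw [Finset.prod_coe_sort β F, Finset.prod_coe_sort _ F]
  rw [← Finset.prod_union Finset.disjoint_sdiff,
    Finset.union_sdiff_of_subset (Finset.subset_univ β)]

end Meas

section Key

variable {n k : ℕ} {X : Fin n → Type} [∀ i, MeasurableSpace (X i)]
  (μ : (α : Finset (Fin n)) → Measure ((i : α) → X i))
  (ν : ∀ i, Measure (X i)) [∀ i, IsProbabilityMeasure (ν i)]
  (mc Mc : ℝ)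

/-- abbreviation for the consistency hypothesis -/
def Cons : Prop :=
  ∀ (α β : Finset (Fin n)), α.card = k → β.card = k →
    Measure.map (fun (x : (i : α) → X i) (i : ((α ∩ β) : Finset (Fin n))) =>
        x ⟨i.1, Finset.mem_of_mem_inter_left i.2⟩) (μ α) =
    Measure.map (fun (x : (i : β) → X i) (i : ((α ∩ β) : Finset (Fin n))) =>
        x ⟨i.1, Finset.mem_of_mem_inter_right i.2⟩) (μ β)

/-- abbreviation for the density hypothesis -/
def Dens : Prop :=
  ∀ α : Finset (Fin n), α.card = k →
    ∃ ρ : ((i : α) → X i) → ℝ≥0∞,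
      μ α = (Measure.pi fun i : α => ν i).withDensity ρ ∧
      ∀ᵐ x ∂(Measure.pi fun i : α => ν i),
        ENNReal.ofReal mc ≤ ρ x ∧ ρ x ≤ ENNReal.ofReal Mc

variable {μ ν mc Mc}

lemma cons_pr (hcons : Cons (k := k) μ) {ε α α' : Finset (Fin n)}
    (hα : α.card = k) (hα' : α'.card = k) (h1 : ε ⊆ α) (h2 : ε ⊆ α') :
    Measure.map (pr (X := X) h1) (μ α) = Measure.map (pr (X := X) h2) (μ α') := by
  have hε : ε ⊆ α ∩ α' := Finset.subset_inter h1 h2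
  have hc : Measure.map (pr (X := X) (Finset.inter_subset_left : α ∩ α' ⊆ α)) (μ α)
      = Measure.map (pr (X := X) (Finset.inter_subset_right : α ∩ α' ⊆ α')) (μ α') :=
    hcons α α' hα hα'
  have e1 : pr (X := X) h1 = (pr (X := X) hε) ∘ (pr (X := X) Finset.inter_subset_left) := rfl
  have e2 : pr (X := X) h2 = (pr (X := X) hε) ∘ (pr (X := X) Finset.inter_subset_right) := rfl
  rw [e1, e2, ← Measure.map_map (measurable_pr _) (measurable_pr _),
    ← Measure.map_map (measurable_pr _) (measurable_pr _), hc]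

/-- canonical extension of a small set to one of cardinality `k` -/
noncomputable def extSet' {n k : ℕ} (hkn : k ≤ n) (δ : Finset (Fin n)) (hδ : δ.card ≤ k) : Finset (Fin n) :=
  (Finset.exists_subsuperset_card_eq (Finset.subset_univ δ) hδ
    (by simpa using hkn)).choose

lemma extSet_sub' {n k : ℕ} (hkn : k ≤ n) (δ : Finset (Fin n)) (hδ : δ.card ≤ k) :
    δ ⊆ extSet' hkn δ hδ :=
  (Finset.exists_subsuperset_card_eq (Finset.subset_univ δ) hδ (by simpa using hkn)).choose_spec.1

lemma extSet_card' {n k : ℕ} (hkn : k ≤ n) (δ : Finset (Fin n)) (hδ : δ.card ≤ k) :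
    (extSet' hkn δ hδ).card = k :=
  (Finset.exists_subsuperset_card_eq (Finset.subset_univ δ) hδ
    (by simpa using hkn)).choose_spec.2.2

/-- the marginal of the given family on a small subset of coordinates -/
noncomputable def must (hkn : k ≤ n) (δ : Finset (Fin n)) (hδ : δ.card ≤ k) :
    Measure (∀ i : δ, X i) :=
  Measure.map (pr (X := X) (extSet_sub' hkn δ hδ)) (μ (extSet' hkn δ hδ))

lemma must_prob (hkn : k ≤ n)
    (hprob : ∀ α : Finset (Fin n), α.card = k → IsProbabilityMeasure (μ α))
    (δ : Finset (Fin n)) (hδ : δ.card ≤ k) :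
    IsProbabilityMeasure (must (μ := μ) hkn δ hδ) := by
  haveI := hprob _ (extSet_card' hkn δ hδ)
  exact Measure.isProbabilityMeasure_map (measurable_pr _).aemeasurable

lemma must_eq (hcons : Cons (k := k) μ) (hkn : k ≤ n) {β : Finset (Fin n)} (hβ : β.card = k) :
    must (μ := μ) hkn β hβ.le = μ β := by
  rw [must, cons_pr hcons (extSet_card' hkn β hβ.le) hβ
    (extSet_sub' hkn β hβ.le) (Finset.Subset.refl β)]
  have : pr (X := X) (Finset.Subset.refl β) = id := rfl
  rw [this, Measure.map_id]

lemma must_map (hcons : Cons (k := k) μ) (hkn : k ≤ n) {ε δ : Finset (Fin n)}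
    (hεδ : ε ⊆ δ) (hδ : δ.card ≤ k) :
    Measure.map (pr (X := X) hεδ) (must (μ := μ) hkn δ hδ)
      = must (μ := μ) hkn ε ((Finset.card_le_card hεδ).trans hδ) := by
  rw [must, Measure.map_map (measurable_pr _) (measurable_pr _)]
  have : (pr (X := X) hεδ) ∘ (pr (X := X) (extSet_sub' hkn δ hδ))
      = pr (X := X) (hεδ.trans (extSet_sub' hkn δ hδ)) := rfl
  rw [this, must]
  exact cons_pr hcons (extSet_card' hkn δ hδ)
    (extSet_card' hkn ε ((Finset.card_le_card hεδ).trans hδ)) _ _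

lemma mu_bounds (hdens : Dens (k := k) μ ν mc Mc) {α : Finset (Fin n)} (hα : α.card = k)
    {u : Set ((i : α) → X i)} (hu : MeasurableSet u) :
    ENNReal.ofReal mc * (Measure.pi fun i : α => ν i) u ≤ μ α u ∧
      μ α u ≤ ENNReal.ofReal Mc * (Measure.pi fun i : α => ν i) u := by
  obtain ⟨ρ, hρ, hae⟩ := hdens α hα
  rw [hρ, withDensity_apply _ hu]
  constructor
  · rw [← setLIntegral_const u (ENNReal.ofReal mc)]
    exact lintegral_mono_ae (ae_restrict_of_ae (hae.mono fun x hx => hx.1))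
  · rw [← setLIntegral_const u (ENNReal.ofReal Mc)]
    exact lintegral_mono_ae (ae_restrict_of_ae (hae.mono fun x hx => hx.2))

lemma must_bounds (hdens : Dens (k := k) μ ν mc Mc) (hkn : k ≤ n)
    {δ : Finset (Fin n)} (hδ : δ.card ≤ k)
    {u : Set (∀ i : δ, X i)} (hu : MeasurableSet u) :
    ENNReal.ofReal mc * (Measure.pi fun i : δ => ν i) u ≤ must (μ := μ) hkn δ hδ u ∧
      must (μ := μ) hkn δ hδ u ≤ ENNReal.ofReal Mc * (Measure.pi fun i : δ => ν i) u := by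
  rw [must, Measure.map_apply (measurable_pr _) hu]
  have hpre := (mp_pr (X := X) ν (extSet_sub' hkn δ hδ)).measure_preimage
    hu.nullMeasurableSet
  rw [← hpre]
  exact mu_bounds hdens (extSet_card' hkn δ hδ) ((measurable_pr _) hu)

lemma must_ac (hdens : Dens (k := k) μ ν mc Mc) (hkn : k ≤ n)
    {δ : Finset (Fin n)} (hδ : δ.card ≤ k) :
    must (μ := μ) hkn δ hδ ≪ (Measure.pi fun i : δ => ν i) := by
  refine Measure.AbsolutelyContinuous.mk fun u hu h0 => ?_
  have := (must_bounds hdens hkn hδ hu).2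
  rw [h0, mul_zero] at this
  exact nonpos_iff_eq_zero.1 this

/-- truncated marginal density -/
noncomputable def Gd (hkn : k ≤ n) (δ : Finset (Fin n)) (hδ : δ.card ≤ k) :
    (∀ i : δ, X i) → ℝ≥0∞ := fun x =>
  min (ENNReal.ofReal Mc)
    (max (ENNReal.ofReal mc)
      ((must (μ := μ) hkn δ hδ).rnDeriv (Measure.pi fun i : δ => ν i) x))

lemma Gd_meas (hkn : k ≤ n) (δ : Finset (Fin n)) (hδ : δ.card ≤ k) :
    Measurable (Gd (μ := μ) (ν := ν) (mc := mc) (Mc := Mc) hkn δ hδ) :=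
  measurable_const.min (measurable_const.max (Measure.measurable_rnDeriv _ _))

lemma Gd_le (hkn : k ≤ n) (δ : Finset (Fin n)) (hδ : δ.card ≤ k) (x : ∀ i : δ, X i) :
    Gd (μ := μ) (ν := ν) (mc := mc) (Mc := Mc) hkn δ hδ x ≤ ENNReal.ofReal Mc := min_le_left _ _

lemma Gd_ge (hmM : mc ≤ Mc) (hkn : k ≤ n) (δ : Finset (Fin n)) (hδ : δ.card ≤ k)
    (x : ∀ i : δ, X i) :
    ENNReal.ofReal mc ≤ Gd (μ := μ) (ν := ν) (mc := mc) (Mc := Mc) hkn δ hδ x :=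
  le_min (ENNReal.ofReal_le_ofReal hmM) (le_max_left _ _)

lemma Gd_lt_top (hkn : k ≤ n) (δ : Finset (Fin n)) (hδ : δ.card ≤ k) (x : ∀ i : δ, X i) :
    Gd (μ := μ) (ν := ν) (mc := mc) (Mc := Mc) hkn δ hδ x < ⊤ :=
  lt_of_le_of_lt (Gd_le hkn δ hδ x) ENNReal.ofReal_lt_top

lemma Gd_withDensity (hdens : Dens (k := k) μ ν mc Mc)
    (hprob : ∀ α : Finset (Fin n), α.card = k → IsProbabilityMeasure (μ α))
    (hkn : k ≤ n) (δ : Finset (Fin n)) (hδ : δ.card ≤ k) :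
    (Measure.pi fun i : δ => ν i).withDensity (Gd (μ := μ) (ν := ν) (mc := mc) (Mc := Mc) hkn δ hδ)
      = must (μ := μ) hkn δ hδ := by
  haveI := must_prob (μ := μ) hkn hprob δ hδ
  have hac := must_ac (μ := μ) hdens hkn hδ
  set g := (must (μ := μ) hkn δ hδ).rnDeriv (Measure.pi fun i : δ => ν i) with hg
  have hwd : (Measure.pi fun i : δ => ν i).withDensity g = must (μ := μ) hkn δ hδ :=
    Measure.withDensity_rnDeriv_eq _ _ hac
  have hub : g ≤ᵐ[Measure.pi fun i : δ => ν i] fun _ => ENNReal.ofReal Mc := by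
    refine ae_le_of_forall_setLIntegral_le_of_sigmaFinite (Measure.measurable_rnDeriv _ _)
      fun u hu _ => ?_
    rw [← withDensity_apply _ hu, hwd, setLIntegral_const]
    exact (must_bounds hdens hkn hδ hu).2
  have hlb : (fun _ => ENNReal.ofReal mc) ≤ᵐ[Measure.pi fun i : δ => ν i] g := by
    refine ae_le_of_forall_setLIntegral_le_of_sigmaFinite measurable_const
      fun u hu _ => ?_
    rw [setLIntegral_const, ← withDensity_apply _ hu, hwd]
    exact (must_bounds hdens hkn hδ hu).1
  have hae : Gd (μ := μ) (ν := ν) (mc := mc) (Mc := Mc) hkn δ hδ =ᵐ[Measure.pi fun i : δ => ν i] g := by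
    filter_upwards [hub, hlb] with x h1 h2
    simp only [Gd, ← hg]
    rw [max_eq_right h2, min_eq_right h1]
  rw [withDensity_congr_ae hae, hwd]

omit [∀ i, IsProbabilityMeasure (ν i)] in
lemma pr_gl {ε δ : Finset (Fin n)} (hεδ : ε ⊆ δ)
    (z : (∀ i : ε, X i) × (∀ i : ((δ \ ε) : Finset (Fin n)), X i)) :
    pr (X := X) hεδ (gl (X := X) hεδ z) = z.1 := by
  funext j
  show gl (X := X) hεδ z ⟨j.1, hεδ j.2⟩ = z.1 j
  simp only [gl, dif_pos j.2]

omit [∀ i, IsProbabilityMeasure (ν i)] in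
lemma prU_glU (β : Finset (Fin n))
    (z : (∀ i : β, X i) × (∀ i : ((Finset.univ \ β) : Finset (Fin n)), X i)) :
    prU (X := X) β (glU (X := X) β z) = z.1 := by
  funext j
  show glU (X := X) β z j.1 = z.1 j
  simp only [glU, dif_pos j.2]

/-- the marginal identity for the truncated densities -/
lemma M_marg (hcons : Cons (k := k) μ) (hdens : Dens (k := k) μ ν mc Mc)
    (hprob : ∀ α : Finset (Fin n), α.card = k → IsProbabilityMeasure (μ α))
    (hkn : k ≤ n) {ε δ : Finset (Fin n)} (hεδ : ε ⊆ δ) (hδ : δ.card ≤ k) :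
    ∀ᵐ z ∂(Measure.pi fun i : ε => ν i),
      ∫⁻ v, Gd (μ := μ) (ν := ν) (mc := mc) (Mc := Mc) hkn δ hδ (gl (X := X) hεδ (z, v))
          ∂(Measure.pi fun i : ((δ \ ε) : Finset (Fin n)) => ν i)
        = Gd (μ := μ) (ν := ν) (mc := mc) (Mc := Mc) hkn ε
            ((Finset.card_le_card hεδ).trans hδ) z := by
  have hε : ε.card ≤ k := (Finset.card_le_card hεδ).trans hδ
  have hGm := Gd_meas (μ := μ) (ν := ν) (mc := mc) (Mc := Mc) hkn δ hδ
  have hglue : Measurable (fun p : (∀ i : ε, X i) × (∀ i : ((δ \ ε) : Finset (Fin n)), X i) =>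
      Gd (μ := μ) (ν := ν) (mc := mc) (Mc := Mc) hkn δ hδ (gl (X := X) hεδ p)) :=
    hGm.comp (measurable_gl hεδ)
  have hLmeas : Measurable (fun z => ∫⁻ v,
      Gd (μ := μ) (ν := ν) (mc := mc) (Mc := Mc) hkn δ hδ (gl (X := X) hεδ (z, v))
        ∂(Measure.pi fun i : ((δ \ ε) : Finset (Fin n)) => ν i)) :=
    hglue.lintegral_prod_right'
  refine ae_eq_of_forall_setLIntegral_eq_of_sigmaFinite₀ hLmeas.aemeasurable
    (Gd_meas (μ := μ) (ν := ν) (mc := mc) (Mc := Mc) hkn ε hε).aemeasurable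
    fun u hu _ => ?_
  have hpreu : MeasurableSet ((pr (X := X) hεδ) ⁻¹' u) := measurable_pr hεδ hu
  have hind : Measurable (Set.indicator ((pr (X := X) hεδ) ⁻¹' u)
      (Gd (μ := μ) (ν := ν) (mc := mc) (Mc := Mc) hkn δ hδ)) := hGm.indicator hpreu
  calc ∫⁻ z in u, (fun z => ∫⁻ v,
        Gd (μ := μ) (ν := ν) (mc := mc) (Mc := Mc) hkn δ hδ (gl (X := X) hεδ (z, v))
          ∂(Measure.pi fun i : ((δ \ ε) : Finset (Fin n)) => ν i)) z
          ∂(Measure.pi fun i : ε => ν i)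
      = ∫⁻ z, Set.indicator u (fun z => ∫⁻ v,
          Gd (μ := μ) (ν := ν) (mc := mc) (Mc := Mc) hkn δ hδ (gl (X := X) hεδ (z, v))
            ∂(Measure.pi fun i : ((δ \ ε) : Finset (Fin n)) => ν i)) z
          ∂(Measure.pi fun i : ε => ν i) := (lintegral_indicator hu _).symm
    _ = ∫⁻ z, ∫⁻ v, Set.indicator ((pr (X := X) hεδ) ⁻¹' u)
          (Gd (μ := μ) (ν := ν) (mc := mc) (Mc := Mc) hkn δ hδ) (gl (X := X) hεδ (z, v))
            ∂(Measure.pi fun i : ((δ \ ε) : Finset (Fin n)) => ν i)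
          ∂(Measure.pi fun i : ε => ν i) := by
        refine lintegral_congr fun z => ?_
        by_cases hz : z ∈ u
        · rw [Set.indicator_of_mem hz]
          refine lintegral_congr fun v => ?_
          rw [Set.indicator_of_mem]
          rw [Set.mem_preimage, pr_gl (X := X) hεδ (z, v)]
          exact hz
        · rw [Set.indicator_of_notMem hz]
          have hzero : ∀ v, Set.indicator ((pr (X := X) hεδ) ⁻¹' u)
              (Gd (μ := μ) (ν := ν) (mc := mc) (Mc := Mc) hkn δ hδ)
              (gl (X := X) hεδ (z, v)) = 0 := fun v => by
            rw [Set.indicator_of_notMem]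
            rw [Set.mem_preimage, pr_gl (X := X) hεδ (z, v)]
            exact hz
          rw [lintegral_congr hzero, lintegral_zero]
    _ = ∫⁻ p, Set.indicator ((pr (X := X) hεδ) ⁻¹' u)
          (Gd (μ := μ) (ν := ν) (mc := mc) (Mc := Mc) hkn δ hδ) (gl (X := X) hεδ p)
          ∂((Measure.pi fun i : ε => ν i).prod
            (Measure.pi fun i : ((δ \ ε) : Finset (Fin n)) => ν i)) :=
        (lintegral_prod _ (hind.comp (measurable_gl hεδ)).aemeasurable).symm
    _ = ∫⁻ w, Set.indicator ((pr (X := X) hεδ) ⁻¹' u)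
          (Gd (μ := μ) (ν := ν) (mc := mc) (Mc := Mc) hkn δ hδ) w
          ∂(Measure.pi fun i : δ => ν i) := (mp_gl ν hεδ).lintegral_comp hind
    _ = ∫⁻ w in (pr (X := X) hεδ) ⁻¹' u,
          Gd (μ := μ) (ν := ν) (mc := mc) (Mc := Mc) hkn δ hδ w
          ∂(Measure.pi fun i : δ => ν i) := lintegral_indicator hpreu _
    _ = must (μ := μ) hkn δ hδ ((pr (X := X) hεδ) ⁻¹' u) := by
        rw [← Gd_withDensity (μ := μ) (ν := ν) (mc := mc) (Mc := Mc) hdens hprob hkn δ hδ,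
          withDensity_apply _ hpreu]
    _ = must (μ := μ) hkn ε hε u := by
        rw [← must_map (μ := μ) hcons hkn hεδ hδ, Measure.map_apply (measurable_pr _) hu]
    _ = ∫⁻ z in u, Gd (μ := μ) (ν := ν) (mc := mc) (Mc := Mc) hkn ε hε z
          ∂(Measure.pi fun i : ε => ν i) := by
        rw [← Gd_withDensity (μ := μ) (ν := ν) (mc := mc) (Mc := Mc) hdens hprob hkn ε hε,
          withDensity_apply _ hu]

omit [∀ i, IsProbabilityMeasure (ν i)] in
lemma prU_glU_delta (β δ : Finset (Fin n))
    (hsd : ((δ \ (δ ∩ β)) : Finset (Fin n)) ⊆ (Finset.univ \ β))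
    (z : (∀ i : β, X i) × (∀ i : ((Finset.univ \ β) : Finset (Fin n)), X i)) :
    prU (X := X) δ (glU (X := X) β z)
      = gl (X := X) (Finset.inter_subset_left : δ ∩ β ⊆ δ)
          (pr (X := X) (Finset.inter_subset_right : δ ∩ β ⊆ β) z.1,
            pr (X := X) hsd z.2) := by
  funext i
  show glU (X := X) β z i.1 = _
  by_cases hh : i.1 ∈ β
  · have hmem : i.1 ∈ δ ∩ β := Finset.mem_inter.2 ⟨i.2, hh⟩
    simp only [glU, gl, dif_pos hh, dif_pos hmem]
    rfl
  · have hmem : i.1 ∉ δ ∩ β := fun hc => hh (Finset.mem_inter.1 hc).2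
    simp only [glU, gl, dif_neg hh, dif_neg hmem]
    rfl

/-- the key integral identity -/
lemma Ilem (hcons : Cons (k := k) μ) (hdens : Dens (k := k) μ ν mc Mc)
    (hprob : ∀ α : Finset (Fin n), α.card = k → IsProbabilityMeasure (μ α))
    (hkn : k ≤ n) {δ β : Finset (Fin n)} (hδ : δ.card ≤ k) (hβ : β.card = k)
    {s : Set (∀ i : β, X i)} (hs : MeasurableSet s) :
    ∫⁻ x in (prU (X := X) β) ⁻¹' s,
        Gd (μ := μ) (ν := ν) (mc := mc) (Mc := Mc) hkn δ hδ (prU (X := X) δ x)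
        ∂(Measure.pi ν)
      = ∫⁻ b in s,
          Gd (μ := μ) (ν := ν) (mc := mc) (Mc := Mc) hkn (δ ∩ β)
            ((Finset.card_le_card Finset.inter_subset_left).trans hδ)
            (pr (X := X) (Finset.inter_subset_right : δ ∩ β ⊆ β) b)
          ∂(Measure.pi fun i : β => ν i) := by
  have hsd : ((δ \ (δ ∩ β)) : Finset (Fin n)) ⊆ (Finset.univ \ β) := by
    intro i hi
    rw [Finset.mem_sdiff] at hi ⊢
    refine ⟨Finset.mem_univ i, fun hc => hi.2 (Finset.mem_inter.2 ⟨hi.1, hc⟩)⟩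
  have h2 : (δ ∩ β : Finset (Fin n)) ⊆ δ := Finset.inter_subset_left
  have h1 : (δ ∩ β : Finset (Fin n)) ⊆ β := Finset.inter_subset_right
  have hcap : (δ ∩ β).card ≤ k := (Finset.card_le_card h2).trans hδ
  have hGm := Gd_meas (μ := μ) (ν := ν) (mc := mc) (Mc := Mc) hkn δ hδ
  have hpres : MeasurableSet ((prU (X := X) β) ⁻¹' s) := measurable_prU β hs
  have hind : Measurable (fun x => Set.indicator ((prU (X := X) β) ⁻¹' s)
      (fun x => Gd (μ := μ) (ν := ν) (mc := mc) (Mc := Mc) hkn δ hδ (prU (X := X) δ x)) x) :=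
    (hGm.comp (measurable_prU δ)).indicator hpres
  calc ∫⁻ x in (prU (X := X) β) ⁻¹' s,
        Gd (μ := μ) (ν := ν) (mc := mc) (Mc := Mc) hkn δ hδ (prU (X := X) δ x) ∂(Measure.pi ν)
      = ∫⁻ x, Set.indicator ((prU (X := X) β) ⁻¹' s)
          (fun x => Gd (μ := μ) (ν := ν) (mc := mc) (Mc := Mc) hkn δ hδ (prU (X := X) δ x)) x
          ∂(Measure.pi ν) := (lintegral_indicator hpres _).symm
    _ = ∫⁻ z, Set.indicator ((prU (X := X) β) ⁻¹' s)
          (fun x => Gd (μ := μ) (ν := ν) (mc := mc) (Mc := Mc) hkn δ hδ (prU (X := X) δ x))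
          (glU (X := X) β z)
          ∂((Measure.pi fun i : β => ν i).prod
            (Measure.pi fun i : ((Finset.univ \ β) : Finset (Fin n)) => ν i)) :=
        ((mp_glU ν β).lintegral_comp hind).symm
    _ = ∫⁻ z1, ∫⁻ z2, Set.indicator ((prU (X := X) β) ⁻¹' s)
          (fun x => Gd (μ := μ) (ν := ν) (mc := mc) (Mc := Mc) hkn δ hδ (prU (X := X) δ x))
          (glU (X := X) β (z1, z2))
          ∂(Measure.pi fun i : ((Finset.univ \ β) : Finset (Fin n)) => ν i)
          ∂(Measure.pi fun i : β => ν i) :=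
        lintegral_prod _ (hind.comp (measurable_glU β)).aemeasurable
    _ = ∫⁻ z1, Set.indicator s (fun b => ∫⁻ z2,
          Gd (μ := μ) (ν := ν) (mc := mc) (Mc := Mc) hkn δ hδ
            (gl (X := X) h2 (pr (X := X) h1 b, pr (X := X) hsd z2))
          ∂(Measure.pi fun i : ((Finset.univ \ β) : Finset (Fin n)) => ν i)) z1
          ∂(Measure.pi fun i : β => ν i) := by
        refine lintegral_congr fun z1 => ?_
        by_cases hz : z1 ∈ s
        · rw [Set.indicator_of_mem hz]
          refine lintegral_congr fun z2 => ?_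
          rw [Set.indicator_of_mem (by
            rw [Set.mem_preimage, prU_glU (X := X) β (z1, z2)]
            exact hz)]
          rw [prU_glU_delta (X := X) β δ hsd (z1, z2)]
        · rw [Set.indicator_of_notMem hz]
          have hzero : ∀ z2, Set.indicator ((prU (X := X) β) ⁻¹' s)
              (fun x => Gd (μ := μ) (ν := ν) (mc := mc) (Mc := Mc) hkn δ hδ (prU (X := X) δ x))
              (glU (X := X) β (z1, z2)) = 0 := fun z2 => by
            rw [Set.indicator_of_notMem]
            rw [Set.mem_preimage, prU_glU (X := X) β (z1, z2)]
            exact hz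
          rw [lintegral_congr hzero, lintegral_zero]
    _ = ∫⁻ z1, Set.indicator s (fun b => ∫⁻ v,
          Gd (μ := μ) (ν := ν) (mc := mc) (Mc := Mc) hkn δ hδ
            (gl (X := X) h2 (pr (X := X) h1 b, v))
          ∂(Measure.pi fun i : ((δ \ (δ ∩ β)) : Finset (Fin n)) => ν i)) z1
          ∂(Measure.pi fun i : β => ν i) := by
        refine lintegral_congr fun z1 => ?_
        by_cases hz : z1 ∈ s
        · rw [Set.indicator_of_mem hz, Set.indicator_of_mem hz]
          exact (mp_pr ν hsd).lintegral_comp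
            (hGm.comp ((measurable_gl h2).comp (Measurable.prodMk measurable_const measurable_id)))
        · rw [Set.indicator_of_notMem hz, Set.indicator_of_notMem hz]
    _ = ∫⁻ z1, Set.indicator s (fun b =>
          Gd (μ := μ) (ν := ν) (mc := mc) (Mc := Mc) hkn (δ ∩ β) hcap
            (pr (X := X) h1 b)) z1
          ∂(Measure.pi fun i : β => ν i) := by
        have hae := M_marg (μ := μ) (ν := ν) (mc := mc) (Mc := Mc) hcons hdens hprob hkn h2 hδ
        have haeb := (mp_pr (X := X) ν h1).quasiMeasurePreserving.ae_eq_comp hae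
        refine lintegral_congr_ae ?_
        filter_upwards [haeb] with z1 hz1
        by_cases hz : z1 ∈ s
        · rw [Set.indicator_of_mem hz, Set.indicator_of_mem hz]
          exact hz1
        · rw [Set.indicator_of_notMem hz, Set.indicator_of_notMem hz]
    _ = ∫⁻ b in s,
          Gd (μ := μ) (ν := ν) (mc := mc) (Mc := Mc) hkn (δ ∩ β) hcap
            (pr (X := X) h1 b)
          ∂(Measure.pi fun i : β => ν i) := lintegral_indicator hs _

end Key

end Stmt3

open Stmt3

/-- density condition. For `1 ≤ k < n` there is a constant `λ_{nk} > 1` such that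
whenever a consistent family of probability measures `μ_α` has densities `ρ_α` with respect to
the products `ν_α = ∏_{i ∈ α} ν_i` satisfying `m ≤ ρ_α ≤ M` a.e. with `M/m ≤ λ_{nk}`,
a uniting probability measure exists. -/
theorem statement3 (n k : ℕ) (hk : 1 ≤ k) (hkn : k < n) :
    ∃ lam : ℝ, 1 < lam ∧
      ∀ (X : Fin n → Type) [inst : ∀ i, MeasurableSpace (X i)]
        (μ : (α : Finset (Fin n)) → Measure ((i : α) → X i))
        (ν : ∀ i, Measure (X i)),
        (∀ i, IsProbabilityMeasure (ν i)) →
        (∀ α : Finset (Fin n), α.card = k → IsProbabilityMeasure (μ α)) →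
        (∀ (α β : Finset (Fin n)), α.card = k → β.card = k →
          Measure.map (fun (x : (i : α) → X i) (i : (α ∩ β : Finset (Fin n))) =>
              x ⟨i.1, Finset.mem_of_mem_inter_left i.2⟩) (μ α) =
          Measure.map (fun (x : (i : β) → X i) (i : (α ∩ β : Finset (Fin n))) =>
              x ⟨i.1, Finset.mem_of_mem_inter_right i.2⟩) (μ β)) →
        ∀ m M : ℝ, 0 < m → m ≤ M → M / m ≤ lam →
        (∀ α : Finset (Fin n), α.card = k →
          ∃ ρ : ((i : α) → X i) → ℝ≥0∞,
            μ α = (Measure.pi fun i : α => ν i).withDensity ρ ∧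
            ∀ᵐ x ∂(Measure.pi fun i : α => ν i),
              ENNReal.ofReal m ≤ ρ x ∧ ρ x ≤ ENNReal.ofReal M) →
        ∃ π : Measure (∀ i, X i), IsProbabilityMeasure π ∧
          ∀ α : Finset (Fin n), α.card = k →
            Measure.map (fun (x : ∀ i, X i) (i : α) => x i) π = μ α := by
  classical
  have hpos : (0:ℝ) < (2 * 4 ^ n)⁻¹ := by positivity
  refine ⟨1 + (2 * 4 ^ n : ℝ)⁻¹, by linarith, ?_⟩
  intro X inst μ ν hν hprob hcons mc Mc hm hmM hlam hdens
  haveI := hν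
  have hkn' : k ≤ n := hkn.le
  have hCons : Cons (k := k) μ := hcons
  have hDens : Dens (k := k) μ ν mc Mc := hdens
  -- a set of cardinality k
  obtain ⟨β₀, -, -, hβ₀card⟩ := Finset.exists_subsuperset_card_eq
    (Finset.empty_subset (Finset.univ : Finset (Fin n))) (by simp)
    (by simpa using hkn')
  -- basic bounds
  haveI := hprob β₀ hβ₀card
  have hbb := mu_bounds (μ := μ) hDens hβ₀card (MeasurableSet.univ)
  have hm1 : mc ≤ 1 := by
    have h := hbb.1
    simp only [measure_univ, mul_one] at h
    exact ENNReal.ofReal_le_one.1 h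
  have h1M : 1 ≤ Mc := by
    have h := hbb.2
    simp only [measure_univ, mul_one] at h
    exact ENNReal.one_le_ofReal.1 h
  have hmc0 : (0:ℝ) ≤ mc := hm.le
  have hdiff : Mc - mc ≤ (2 * 4 ^ n : ℝ)⁻¹ := by
    have hMlm : Mc ≤ (1 + (2 * 4 ^ n : ℝ)⁻¹) * mc := (div_le_iff₀ hm).1 hlam
    nlinarith
  -- the density
  set S := (Finset.univ : Finset (Fin n)).powerset.filter (fun γ => γ.card ≤ k) with hS
  set GT : Finset (Fin n) → (∀ i, X i) → ℝ := fun δ x =>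
    if h : δ.card ≤ k then
      (Gd (μ := μ) (ν := ν) (mc := mc) (Mc := Mc) hkn' δ h (prU (X := X) δ x)).toReal
    else 0 with hGT
  set F : (∀ i, X i) → ℝ := fun x =>
    ∑ γ ∈ S, ∑ δ ∈ γ.powerset, (-1:ℝ)^(γ.card - δ.card) * GT δ x with hF
  have hGTmeas : ∀ δ, Measurable (GT δ) := by
    intro δ
    rw [hGT]
    by_cases h : δ.card ≤ k
    · simp only [dif_pos h]
      exact (ENNReal.measurable_toReal.comp
        ((Gd_meas (μ := μ) (ν := ν) (mc := mc) (Mc := Mc) hkn' δ h))).comp (measurable_prU δ)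
    · simp only [dif_neg h]
      exact measurable_const
  have hGTbdd : ∀ δ x, δ.card ≤ k → mc ≤ GT δ x ∧ GT δ x ≤ Mc := by
    intro δ x h
    simp only [hGT, dif_pos h]
    have hne : Gd (μ := μ) (ν := ν) (mc := mc) (Mc := Mc) hkn' δ h (prU (X := X) δ x) ≠ ⊤ :=
      (Gd_lt_top hkn' δ h _).ne
    constructor
    · have := Gd_ge (μ := μ) (ν := ν) hmM hkn' δ h (prU (X := X) δ x)
      have := ENNReal.toReal_mono hne this
      rwa [ENNReal.toReal_ofReal hmc0] at this
    · have := Gd_le (μ := μ) (ν := ν) (mc := mc) (Mc := Mc) hkn' δ h (prU (X := X) δ x)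
      have := ENNReal.toReal_mono ENNReal.ofReal_ne_top this
      rwa [ENNReal.toReal_ofReal (by linarith)] at this
  have hGTnn : ∀ δ x, 0 ≤ GT δ x := by
    intro δ x
    simp only [hGT]
    by_cases h : δ.card ≤ k
    · simp only [dif_pos h]; exact ENNReal.toReal_nonneg
    · simp only [dif_neg h]
      exact le_rfl
  have hGTabs : ∀ δ x, δ.card ≤ k → |GT δ x - 1| ≤ Mc - mc := by
    intro δ x h
    have := hGTbdd δ x h
    rw [abs_le]
    constructor <;> nlinarith [this.1, this.2]
  -- lower bound on F
  have hFsub : ∀ x, F x - 1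
      = ∑ γ ∈ S, ∑ δ ∈ γ.powerset, (-1:ℝ)^(γ.card - δ.card) * (GT δ x - 1) := by
    intro x
    have h1 : ∑ γ ∈ S, ∑ δ ∈ γ.powerset, (-1:ℝ)^(γ.card - δ.card) * (GT δ x - 1)
        = (∑ γ ∈ S, ∑ δ ∈ γ.powerset, (-1:ℝ)^(γ.card - δ.card) * GT δ x)
          - ∑ γ ∈ S, ∑ δ ∈ γ.powerset, (-1:ℝ)^(γ.card - δ.card) := by
      rw [← Finset.sum_sub_distrib]
      refine Finset.sum_congr rfl fun γ _ => ?_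
      rw [← Finset.sum_sub_distrib]
      refine Finset.sum_congr rfl fun δ _ => ?_
      ring
    rw [h1, hS, combOne, hF]
  have hFhalf : ∀ x, (2:ℝ)⁻¹ ≤ F x := by
    intro x
    have habs : |F x - 1| ≤ 2⁻¹ := by
      rw [hFsub x]
      calc |∑ γ ∈ S, ∑ δ ∈ γ.powerset, (-1:ℝ)^(γ.card - δ.card) * (GT δ x - 1)|
          ≤ ∑ γ ∈ S, |∑ δ ∈ γ.powerset, (-1:ℝ)^(γ.card - δ.card) * (GT δ x - 1)| :=
            Finset.abs_sum_le_sum_abs _ _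
        _ ≤ ∑ γ ∈ S, (2:ℝ)^n * (Mc - mc) := by
            refine Finset.sum_le_sum fun γ hγ => ?_
            have hγk : γ.card ≤ k := (Finset.mem_filter.1 hγ).2
            calc |∑ δ ∈ γ.powerset, (-1:ℝ)^(γ.card - δ.card) * (GT δ x - 1)|
                ≤ ∑ δ ∈ γ.powerset, |(-1:ℝ)^(γ.card - δ.card) * (GT δ x - 1)| :=
                  Finset.abs_sum_le_sum_abs _ _
              _ ≤ ∑ δ ∈ γ.powerset, (Mc - mc) := by
                  refine Finset.sum_le_sum fun δ hδ => ?_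
                  have hδk : δ.card ≤ k :=
                    (Finset.card_le_card (Finset.mem_powerset.1 hδ)).trans hγk
                  rw [abs_mul, abs_pow, abs_neg, abs_one, one_pow, one_mul]
                  exact hGTabs δ x hδk
              _ = (2:ℝ)^γ.card * (Mc - mc) := by
                  rw [Finset.sum_const, Finset.card_powerset, nsmul_eq_mul]
                  push_cast
                  ring
              _ ≤ (2:ℝ)^n * (Mc - mc) := by
                  have hγn : γ.card ≤ n := hγk.trans hkn'
                  have := pow_le_pow_right₀ (by norm_num : (1:ℝ) ≤ 2) hγn
                  nlinarith
        _ = (S.card : ℝ) * ((2:ℝ)^n * (Mc - mc)) := by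
            rw [Finset.sum_const, nsmul_eq_mul]
        _ ≤ (2:ℝ)^n * ((2:ℝ)^n * (Mc - mc)) := by
            have hcard : S.card ≤ 2^n := by
              calc S.card ≤ (Finset.univ : Finset (Fin n)).powerset.card :=
                    Finset.card_filter_le _ _
                _ = 2^n := by rw [Finset.card_powerset]; simp
            have h2 : ((S.card : ℝ)) ≤ (2:ℝ)^n := by
              calc ((S.card : ℝ)) ≤ ((2^n : ℕ) : ℝ) := Nat.cast_le.2 hcard
                _ = (2:ℝ)^n := by push_cast; ring
            have hnn : (0:ℝ) ≤ (2:ℝ)^n * (Mc - mc) := mul_nonneg (by positivity) (by linarith)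
            nlinarith
        _ = (4:ℝ)^n * (Mc - mc) := by rw [← mul_assoc, ← mul_pow]; norm_num
        _ ≤ (4:ℝ)^n * (2 * 4 ^ n : ℝ)⁻¹ := by
            have h4 : (0:ℝ) < 4^n := by positivity
            exact mul_le_mul_of_nonneg_left hdiff h4.le
        _ = 2⁻¹ := by
            have h4 : (4:ℝ)^n ≠ 0 := by positivity
            field_simp
    have := abs_le.1 habs
    linarith [this.1]
  have hFnn : ∀ x, 0 ≤ F x := fun x => le_trans (by norm_num) (hFhalf x)
  have hFmeas : Measurable F := by
    rw [hF]
    refine Finset.measurable_sum _ fun γ _ => ?_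
    refine Finset.measurable_sum _ fun δ _ => ?_
    exact (hGTmeas δ).const_mul _
  -- the candidate measure
  set piν := (Measure.pi ν) with hpiν
  set π := piν.withDensity (fun x => ENNReal.ofReal (F x)) with hπ
  have hmain : ∀ β : Finset (Fin n), β.card = k →
      Measure.map (prU (X := X) β) π = μ β := by
    intro β hβ
    refine Measure.ext fun s hs => ?_
    rw [Measure.map_apply (measurable_prU β) hs, hπ,
      withDensity_apply _ (measurable_prU β hs)]
    set A := prU (X := X) β ⁻¹' s with hA
    have hAmeas : MeasurableSet A := measurable_prU β hs
    have hInt : ∀ δ, Integrable (GT δ) (piν.restrict A) := by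
      intro δ
      refine Integrable.mono' (integrable_const Mc)
        (hGTmeas δ).aestronglyMeasurable (ae_of_all _ fun x => ?_)
      rw [Real.norm_eq_abs, abs_le]
      by_cases h : δ.card ≤ k
      · have := hGTbdd δ x h
        constructor <;> nlinarith [this.1, this.2]
      · simp only [hGT, dif_neg h]
        constructor <;> nlinarith
    have hFInt : Integrable F (piν.restrict A) := by
      rw [hF]
      refine integrable_finset_sum _ fun γ _ => ?_
      refine integrable_finset_sum _ fun δ _ => ?_
      exact (hInt δ).const_mul _
    have step1 : ∫⁻ x in A, ENNReal.ofReal (F x) ∂piν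
        = ENNReal.ofReal (∫ x in A, F x ∂piν) :=
      (ofReal_integral_eq_lintegral_ofReal hFInt (ae_of_all _ hFnn)).symm
    -- the T function for the combinatorial identity
    set T : Finset (Fin n) → ℝ := fun ε =>
      if h : ε ⊆ β ∧ ε.card ≤ k then
        ∫ b in s, (Gd (μ := μ) (ν := ν) (mc := mc) (Mc := Mc) hkn' ε h.2
          (pr (X := X) h.1 b)).toReal ∂(Measure.pi fun i : β => ν i)
      else 0 with hT
    have hterm : ∀ γ ∈ S, ∀ δ ∈ γ.powerset, ∫ x in A, GT δ x ∂piν = T (δ ∩ β) := by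
      intro γ hγ δ hδ
      have hδk : δ.card ≤ k :=
        (Finset.card_le_card (Finset.mem_powerset.1 hδ)).trans (Finset.mem_filter.1 hγ).2
      have hcapk : (δ ∩ β).card ≤ k :=
        (Finset.card_le_card Finset.inter_subset_left).trans hδk
      have e1 : ∫ x in A, GT δ x ∂piν
          = ∫ x in A, (Gd (μ := μ) (ν := ν) (mc := mc) (Mc := Mc) hkn' δ hδk
              (prU (X := X) δ x)).toReal ∂piν := by
        refine integral_congr_ae (ae_of_all _ fun x => ?_)
        simp only [hGT, dif_pos hδk]
      rw [e1]
      have e2 : ∫ x in A, (Gd (μ := μ) (ν := ν) (mc := mc) (Mc := Mc) hkn' δ hδk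
            (prU (X := X) δ x)).toReal ∂piν
          = (∫⁻ x in A, Gd (μ := μ) (ν := ν) (mc := mc) (Mc := Mc) hkn' δ hδk
              (prU (X := X) δ x) ∂piν).toReal :=
        integral_toReal (((Gd_meas (μ := μ) (ν := ν) (mc := mc) (Mc := Mc) hkn' δ hδk).comp
          (measurable_prU δ)).aemeasurable) (ae_of_all _ fun x => Gd_lt_top hkn' δ hδk _)
      rw [e2, hA, hpiν,
        Ilem (μ := μ) (ν := ν) (mc := mc) (Mc := Mc) hCons hDens hprob hkn' hδk hβ hs]
      have e3 : (∫⁻ b in s, Gd (μ := μ) (ν := ν) (mc := mc) (Mc := Mc) hkn' (δ ∩ β)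
            ((Finset.card_le_card Finset.inter_subset_left).trans hδk)
            (pr (X := X) (Finset.inter_subset_right : δ ∩ β ⊆ β) b)
            ∂(Measure.pi fun i : β => ν i)).toReal
          = ∫ b in s, (Gd (μ := μ) (ν := ν) (mc := mc) (Mc := Mc) hkn' (δ ∩ β)
              ((Finset.card_le_card Finset.inter_subset_left).trans hδk)
              (pr (X := X) (Finset.inter_subset_right : δ ∩ β ⊆ β) b)).toReal
              ∂(Measure.pi fun i : β => ν i) :=
        (integral_toReal (((Gd_meas (μ := μ) (ν := ν) (mc := mc) (Mc := Mc) hkn' (δ ∩ β) _).comp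
          (measurable_pr _)).aemeasurable) (ae_of_all _ fun b => Gd_lt_top hkn' (δ ∩ β) _ _)).symm
      rw [e3]
      simp only [hT]
      rw [dif_pos (⟨Finset.inter_subset_right, hcapk⟩ : (δ ∩ β) ⊆ β ∧ (δ ∩ β).card ≤ k)]
    have step2 : ∫ x in A, F x ∂piν = T β := by
      rw [hF]
      rw [integral_finset_sum _ fun γ _ => integrable_finset_sum _ fun δ _ => (hInt δ).const_mul _]
      have : ∀ γ ∈ S, ∫ x in A, (∑ δ ∈ γ.powerset, (-1:ℝ)^(γ.card - δ.card) * GT δ x) ∂piν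
          = ∑ δ ∈ γ.powerset, (-1:ℝ)^(γ.card - δ.card) * T (δ ∩ β) := by
        intro γ hγ
        rw [integral_finset_sum _ fun δ _ => (hInt δ).const_mul _]
        refine Finset.sum_congr rfl fun δ hδ => ?_
        rw [integral_const_mul, hterm γ hγ δ hδ]
      rw [Finset.sum_congr rfl this, hS]
      exact combC β hβ T
    have step3 : T β = ∫ b in s, (Gd (μ := μ) (ν := ν) (mc := mc) (Mc := Mc) hkn' β hβ.le
        b).toReal ∂(Measure.pi fun i : β => ν i) := by
      simp only [hT]
      rw [dif_pos (⟨Finset.Subset.refl β, hβ.le⟩ : β ⊆ β ∧ β.card ≤ k)]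
      rfl
    have step4 : ENNReal.ofReal (∫ b in s, (Gd (μ := μ) (ν := ν) (mc := mc) (Mc := Mc)
          hkn' β hβ.le b).toReal ∂(Measure.pi fun i : β => ν i))
        = ∫⁻ b in s, Gd (μ := μ) (ν := ν) (mc := mc) (Mc := Mc) hkn' β hβ.le b
            ∂(Measure.pi fun i : β => ν i) := by
      rw [ofReal_integral_eq_lintegral_ofReal]
      · refine lintegral_congr fun b => ENNReal.ofReal_toReal (Gd_lt_top hkn' β hβ.le b).ne
      · refine Integrable.mono' (integrable_const Mc)
          ((ENNReal.measurable_toReal.comp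
            (Gd_meas (μ := μ) (ν := ν) (mc := mc) (Mc := Mc) hkn' β hβ.le))).aestronglyMeasurable
          (ae_of_all _ fun b => ?_)
        rw [Real.norm_eq_abs, abs_of_nonneg ENNReal.toReal_nonneg]
        have := Gd_le (μ := μ) (ν := ν) (mc := mc) (Mc := Mc) hkn' β hβ.le b
        have := ENNReal.toReal_mono ENNReal.ofReal_ne_top this
        rwa [ENNReal.toReal_ofReal (by linarith)] at this
      · exact ae_of_all _ fun b => ENNReal.toReal_nonneg
    rw [step1, step2, step3, step4, ← withDensity_apply _ hs,
      Gd_withDensity (μ := μ) (ν := ν) (mc := mc) (Mc := Mc) hDens hprob hkn' β hβ.le,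
      must_eq (μ := μ) hCons hkn' hβ]
  have hπprob : IsProbabilityMeasure π := by
    constructor
    haveI := hprob β₀ hβ₀card
    have h1 : π Set.univ = π (prU (X := X) β₀ ⁻¹' Set.univ) := by rw [Set.preimage_univ]
    rw [h1, ← Measure.map_apply (measurable_prU β₀) MeasurableSet.univ, hmain β₀ hβ₀card]
    exact measure_univ
  exact ⟨π, hπprob, hmain⟩
end

section
/- Let {μ_12, μ_13, μ_23} be a consistent family of probability measures on X_1×X_2, X_1×X_3, X_2×X_3 with one-dimensional marginals μ_1, μ_2, μ_3, and suppose μ_ij ≥ (2/3)·μ_i ⊗ μ_j for all {i,j}. Then the measure μ on X_1×X_2×X_3 given by μ = (μ_12 − (2/3)μ_1⊗μ_2) ⊗ μ_3 + (μ_13 − (2/3)μ_1⊗μ_3) ⊗ μ_2 + (μ_23 − (2/3)μ_2⊗μ_3) ⊗ μ_1 (with the factors placed in the appropriate coordinates) is a nonnegative uniting measure; in particular Π(μ_ij) is nonempty. -/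
open MeasureTheory
open scoped ENNReal

private lemma smul_prod_aux {A B : Type*} [MeasurableSpace A] [MeasurableSpace B]
    (c : ℝ≥0∞) (μ : Measure A) (ν : Measure B) [SFinite μ] [SFinite ν] :
    (c • μ).prod ν = c • μ.prod ν := by
  ext s hs
  rw [Measure.prod_apply hs, Measure.smul_apply, Measure.prod_apply hs,
    lintegral_smul_measure, smul_eq_mul]

private lemma third_arith : (3 : ℝ≥0∞)⁻¹ + 2 / 3 = 1 := by
  rw [ENNReal.div_eq_inv_mul]
  rw [show (3 : ℝ≥0∞)⁻¹ + 3⁻¹ * 2 = 3⁻¹ * 3 from by ring]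
  exact ENNReal.inv_mul_cancel (by norm_num) (by norm_num)

private lemma map_sub_aux {A B C : Type*} [MeasurableSpace A] [MeasurableSpace B]
    [MeasurableSpace C] {f : A × B → C} (hf : Measurable f)
    (μab π : Measure (A × B)) [IsFiniteMeasure π]
    (hge : (2 / 3 : ℝ≥0∞) • π ≤ μab) (μc : Measure C) [IsFiniteMeasure μc]
    (h1 : Measure.map f μab = μc) (h2 : Measure.map f π = μc) :
    Measure.map f (μab - (2 / 3 : ℝ≥0∞) • π) = (3 : ℝ≥0∞)⁻¹ • μc := by
  haveI : IsFiniteMeasure ((2 / 3 : ℝ≥0∞) • π) := by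
    constructor
    rw [Measure.smul_apply, smul_eq_mul]
    exact ENNReal.mul_lt_top (ENNReal.div_lt_top (by norm_num) (by norm_num)) (measure_lt_top π _)
  ext s hs
  rw [Measure.map_apply hf hs, Measure.sub_apply (hf hs) hge,
    Measure.smul_apply, smul_eq_mul,
    ← Measure.map_apply hf hs, ← Measure.map_apply hf hs, h1, h2,
    Measure.smul_apply, smul_eq_mul]
  refine ENNReal.sub_eq_of_eq_add (ENNReal.mul_ne_top ((ENNReal.div_lt_top (by norm_num) (by norm_num)).ne) (measure_ne_top μc s)) ?_
  rw [← add_mul, third_arith, one_mul]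

/-- if a consistent family `{μ_12, μ_13, μ_23}` with one-dimensional marginals
`μ_1, μ_2, μ_3` satisfies `μ_ij ≥ (2/3)·μ_i ⊗ μ_j`, then the explicit measure
`μ = (μ_12 − (2/3)μ_1⊗μ_2) ⊗ μ_3 + (μ_13 − (2/3)μ_1⊗μ_3) ⊗ μ_2 + (μ_23 − (2/3)μ_2⊗μ_3) ⊗ μ_1`
(with factors placed into the appropriate coordinates) is a (nonnegative) uniting probability
measure; in particular `Π(μ_ij)` is nonempty. -/
theorem statement7
    {X1 X2 X3 : Type*} [MeasurableSpace X1] [MeasurableSpace X2] [MeasurableSpace X3]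
    (μ1 : Measure X1) (μ2 : Measure X2) (μ3 : Measure X3)
    (μ12 : Measure (X1 × X2)) (μ13 : Measure (X1 × X3)) (μ23 : Measure (X2 × X3))
    [IsProbabilityMeasure μ12] [IsProbabilityMeasure μ13] [IsProbabilityMeasure μ23]
    (h121 : Measure.map Prod.fst μ12 = μ1) (h131 : Measure.map Prod.fst μ13 = μ1)
    (h122 : Measure.map Prod.snd μ12 = μ2) (h232 : Measure.map Prod.fst μ23 = μ2)
    (h133 : Measure.map Prod.snd μ13 = μ3) (h233 : Measure.map Prod.snd μ23 = μ3)
    (hge12 : (2 / 3 : ℝ≥0∞) • μ1.prod μ2 ≤ μ12)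
    (hge13 : (2 / 3 : ℝ≥0∞) • μ1.prod μ3 ≤ μ13)
    (hge23 : (2 / 3 : ℝ≥0∞) • μ2.prod μ3 ≤ μ23) :
    ∃ μ : Measure (X1 × X2 × X3),
      μ = Measure.map (fun p : (X1 × X2) × X3 => (p.1.1, p.1.2, p.2))
            ((μ12 - (2 / 3 : ℝ≥0∞) • μ1.prod μ2).prod μ3)
        + Measure.map (fun p : (X1 × X3) × X2 => (p.1.1, p.2, p.1.2))
            ((μ13 - (2 / 3 : ℝ≥0∞) • μ1.prod μ3).prod μ2)
        + Measure.map (fun p : (X2 × X3) × X1 => (p.2, p.1.1, p.1.2))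
            ((μ23 - (2 / 3 : ℝ≥0∞) • μ2.prod μ3).prod μ1) ∧
      IsProbabilityMeasure μ ∧
      Measure.map (fun x : X1 × X2 × X3 => (x.1, x.2.1)) μ = μ12 ∧
      Measure.map (fun x : X1 × X2 × X3 => (x.1, x.2.2)) μ = μ13 ∧
      Measure.map (fun x : X1 × X2 × X3 => x.2) μ = μ23 := by
  -- probability measures for the one-dimensional marginals
  haveI hp1 : IsProbabilityMeasure μ1 := h121 ▸ Measure.isProbabilityMeasure_map measurable_fst.aemeasurable
  haveI hp2 : IsProbabilityMeasure μ2 := h122 ▸ Measure.isProbabilityMeasure_map measurable_snd.aemeasurable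
  haveI hp3 : IsProbabilityMeasure μ3 := h133 ▸ Measure.isProbabilityMeasure_map measurable_snd.aemeasurable
  set ν12 := μ12 - (2 / 3 : ℝ≥0∞) • μ1.prod μ2 with hν12
  set ν13 := μ13 - (2 / 3 : ℝ≥0∞) • μ1.prod μ3 with hν13
  set ν23 := μ23 - (2 / 3 : ℝ≥0∞) • μ2.prod μ3 with hν23
  haveI : IsFiniteMeasure ν12 := isFiniteMeasure_of_le μ12 (Measure.sub_le)
  haveI : IsFiniteMeasure ν13 := isFiniteMeasure_of_le μ13 (Measure.sub_le)
  haveI : IsFiniteMeasure ν23 := isFiniteMeasure_of_le μ23 (Measure.sub_le)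
  haveI : IsFiniteMeasure ((2 / 3 : ℝ≥0∞) • μ1.prod μ2) := isFiniteMeasure_of_le μ12 hge12
  haveI : IsFiniteMeasure ((2 / 3 : ℝ≥0∞) • μ1.prod μ3) := isFiniteMeasure_of_le μ13 hge13
  haveI : IsFiniteMeasure ((2 / 3 : ℝ≥0∞) • μ2.prod μ3) := isFiniteMeasure_of_le μ23 hge23
  -- maps of the product factors under coordinate projections
  have hmap12 : Measure.map Prod.fst (μ1.prod μ2) = μ1 := by simp
  have hmap12' : Measure.map Prod.snd (μ1.prod μ2) = μ2 := by simp
  have hmap13 : Measure.map Prod.fst (μ1.prod μ3) = μ1 := by simp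
  have hmap13' : Measure.map Prod.snd (μ1.prod μ3) = μ3 := by simp
  have hmap23 : Measure.map Prod.fst (μ2.prod μ3) = μ2 := by simp
  have hmap23' : Measure.map Prod.snd (μ2.prod μ3) = μ3 := by simp
  -- the half-measures' marginals
  have f12 : Measure.map Prod.fst ν12 = (3 : ℝ≥0∞)⁻¹ • μ1 :=
    map_sub_aux measurable_fst μ12 (μ1.prod μ2) hge12 μ1 h121 hmap12
  have s12 : Measure.map Prod.snd ν12 = (3 : ℝ≥0∞)⁻¹ • μ2 :=
    map_sub_aux measurable_snd μ12 (μ1.prod μ2) hge12 μ2 h122 hmap12'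
  have f13 : Measure.map Prod.fst ν13 = (3 : ℝ≥0∞)⁻¹ • μ1 :=
    map_sub_aux measurable_fst μ13 (μ1.prod μ3) hge13 μ1 h131 hmap13
  have s13 : Measure.map Prod.snd ν13 = (3 : ℝ≥0∞)⁻¹ • μ3 :=
    map_sub_aux measurable_snd μ13 (μ1.prod μ3) hge13 μ3 h133 hmap13'
  have f23 : Measure.map Prod.fst ν23 = (3 : ℝ≥0∞)⁻¹ • μ2 :=
    map_sub_aux measurable_fst μ23 (μ2.prod μ3) hge23 μ2 h232 hmap23
  have s23 : Measure.map Prod.snd ν23 = (3 : ℝ≥0∞)⁻¹ • μ3 :=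
    map_sub_aux measurable_snd μ23 (μ2.prod μ3) hge23 μ3 h233 hmap23'
  -- embedding maps
  have hg1 : Measurable (fun p : (X1 × X2) × X3 => (p.1.1, p.1.2, p.2)) := by fun_prop
  have hg2 : Measurable (fun p : (X1 × X3) × X2 => (p.1.1, p.2, p.1.2)) := by fun_prop
  have hg3 : Measurable (fun p : (X2 × X3) × X1 => (p.2, p.1.1, p.1.2)) := by fun_prop
  set μ : Measure (X1 × X2 × X3) :=
    Measure.map (fun p : (X1 × X2) × X3 => (p.1.1, p.1.2, p.2)) (ν12.prod μ3)
      + Measure.map (fun p : (X1 × X3) × X2 => (p.1.1, p.2, p.1.2)) (ν13.prod μ2)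
      + Measure.map (fun p : (X2 × X3) × X1 => (p.2, p.1.1, p.1.2)) (ν23.prod μ1) with hμ
  have hq12 : Measurable (fun x : X1 × X2 × X3 => (x.1, x.2.1)) := by fun_prop
  have hq13 : Measurable (fun x : X1 × X2 × X3 => (x.1, x.2.2)) := by fun_prop
  have hq23 : Measurable (fun x : X1 × X2 × X3 => x.2) := by fun_prop
  -- first marginal computation: onto X1 × X2
  have hm12 : Measure.map (fun x : X1 × X2 × X3 => (x.1, x.2.1)) μ = μ12 := by
    rw [hμ, Measure.map_add _ _ hq12, Measure.map_add _ _ hq12,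
      Measure.map_map hq12 hg1, Measure.map_map hq12 hg2, Measure.map_map hq12 hg3]
    have e1 : ((fun x : X1 × X2 × X3 => (x.1, x.2.1)) ∘
        (fun p : (X1 × X2) × X3 => (p.1.1, p.1.2, p.2))) = Prod.fst := rfl
    have e2 : ((fun x : X1 × X2 × X3 => (x.1, x.2.1)) ∘
        (fun p : (X1 × X3) × X2 => (p.1.1, p.2, p.1.2))) = Prod.map Prod.fst id := rfl
    have e3 : ((fun x : X1 × X2 × X3 => (x.1, x.2.1)) ∘
        (fun p : (X2 × X3) × X1 => (p.2, p.1.1, p.1.2))) =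
        Prod.swap ∘ Prod.map Prod.fst id := rfl
    rw [e1, e2, e3, Measure.map_fst_prod,
      ← Measure.map_map measurable_swap (measurable_fst.prodMap measurable_id),
      ← Measure.map_prod_map _ _ measurable_fst measurable_id,
      ← Measure.map_prod_map _ _ measurable_fst measurable_id,
      f13, f23, Measure.map_id, Measure.map_id,
      smul_prod_aux, smul_prod_aux, Measure.map_smul, Measure.prod_swap]
    simp only [measure_univ, one_smul]
    have hsplit : ((2 : ℝ≥0∞) / 3) • (μ1.prod μ2) = (3 : ℝ≥0∞)⁻¹ • (μ1.prod μ2) + (3 : ℝ≥0∞)⁻¹ • (μ1.prod μ2) := by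
      rw [← add_smul, show (3 : ℝ≥0∞)⁻¹ + 3⁻¹ = 2 / 3 from by rw [ENNReal.div_eq_inv_mul]; ring]
    rw [← Measure.sub_add_cancel_of_le hge12, hsplit]
    abel_nf
    simp only [two_smul, ← hsplit, hν12]
  have hm13 : Measure.map (fun x : X1 × X2 × X3 => (x.1, x.2.2)) μ = μ13 := by
    rw [hμ, Measure.map_add _ _ hq13, Measure.map_add _ _ hq13,
      Measure.map_map hq13 hg1, Measure.map_map hq13 hg2, Measure.map_map hq13 hg3]
    have e1 : ((fun x : X1 × X2 × X3 => (x.1, x.2.2)) ∘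
        (fun p : (X1 × X2) × X3 => (p.1.1, p.1.2, p.2))) = Prod.map Prod.fst id := rfl
    have e2 : ((fun x : X1 × X2 × X3 => (x.1, x.2.2)) ∘
        (fun p : (X1 × X3) × X2 => (p.1.1, p.2, p.1.2))) = Prod.fst := rfl
    have e3 : ((fun x : X1 × X2 × X3 => (x.1, x.2.2)) ∘
        (fun p : (X2 × X3) × X1 => (p.2, p.1.1, p.1.2))) =
        Prod.swap ∘ Prod.map Prod.snd id := rfl
    rw [e1, e2, e3, Measure.map_fst_prod,
      ← Measure.map_map measurable_swap (measurable_snd.prodMap measurable_id),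
      ← Measure.map_prod_map _ _ measurable_fst measurable_id,
      ← Measure.map_prod_map _ _ measurable_snd measurable_id,
      f12, s23, Measure.map_id, Measure.map_id,
      smul_prod_aux, smul_prod_aux, Measure.map_smul, Measure.prod_swap]
    simp only [measure_univ, one_smul]
    have hsplit : ((2 : ℝ≥0∞) / 3) • (μ1.prod μ3) = (3 : ℝ≥0∞)⁻¹ • (μ1.prod μ3) + (3 : ℝ≥0∞)⁻¹ • (μ1.prod μ3) := by
      rw [← add_smul, show (3 : ℝ≥0∞)⁻¹ + 3⁻¹ = 2 / 3 from by rw [ENNReal.div_eq_inv_mul]; ring]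
    rw [← Measure.sub_add_cancel_of_le hge13, hsplit]
    abel_nf
    simp only [two_smul, ← hsplit, hν13]
    exact add_comm _ _
  have hm23 : Measure.map (fun x : X1 × X2 × X3 => x.2) μ = μ23 := by
    rw [hμ, Measure.map_add _ _ hq23, Measure.map_add _ _ hq23,
      Measure.map_map hq23 hg1, Measure.map_map hq23 hg2, Measure.map_map hq23 hg3]
    have e1 : ((fun x : X1 × X2 × X3 => x.2) ∘
        (fun p : (X1 × X2) × X3 => (p.1.1, p.1.2, p.2))) = Prod.map Prod.snd id := rfl
    have e2 : ((fun x : X1 × X2 × X3 => x.2) ∘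
        (fun p : (X1 × X3) × X2 => (p.1.1, p.2, p.1.2))) =
        Prod.swap ∘ Prod.map Prod.snd id := rfl
    have e3 : ((fun x : X1 × X2 × X3 => x.2) ∘
        (fun p : (X2 × X3) × X1 => (p.2, p.1.1, p.1.2))) = Prod.fst := rfl
    rw [e1, e2, e3, Measure.map_fst_prod,
      ← Measure.map_map measurable_swap (measurable_snd.prodMap measurable_id),
      ← Measure.map_prod_map _ _ measurable_snd measurable_id,
      ← Measure.map_prod_map _ _ measurable_snd measurable_id,
      s12, s13, Measure.map_id, Measure.map_id,
      smul_prod_aux, smul_prod_aux, Measure.map_smul, Measure.prod_swap]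
    simp only [measure_univ, one_smul]
    have hsplit : ((2 : ℝ≥0∞) / 3) • (μ2.prod μ3) = (3 : ℝ≥0∞)⁻¹ • (μ2.prod μ3) + (3 : ℝ≥0∞)⁻¹ • (μ2.prod μ3) := by
      rw [← add_smul, show (3 : ℝ≥0∞)⁻¹ + 3⁻¹ = 2 / 3 from by rw [ENNReal.div_eq_inv_mul]; ring]
    rw [← Measure.sub_add_cancel_of_le hge23, hsplit]
    abel_nf
    simp only [two_smul, ← hsplit, hν23]
    exact add_comm _ _
  refine ⟨μ, rfl, ?_, hm12, hm13, hm23⟩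
  constructor
  have : μ Set.univ = μ12 Set.univ := by
    rw [← hm12, Measure.map_apply hq12 MeasurableSet.univ, Set.preimage_univ]
  rw [this, measure_univ]
end

section
/- Let X_1, ..., X_n be Polish spaces with Borel probability measures μ_1, ..., μ_n, let μ = ∏_{i=1}^n μ_i, and let c ∈ L¹(∏_{i=1}^n X_i, μ). Then there exists a point y ∈ ∏_{i=1}^n X_i such that for every subset α ⊆ {1, ..., n} the section c_α : x_α ↦ c(x_α y_{complement of α}) (the function obtained by fixing the coordinates outside α to those of y) is integrable with respect to μ_α = ∏_{i∈α} μ_i and satisfies ‖c_α‖_{L¹(μ_α)} ≤ 2^{n+1} ‖c‖_{L¹(μ)}. For α the empty set, c_∅ is the constant c(y) and the conclusion reads |c(y)| ≤ 2^{n+1}‖c‖_{L¹(μ)}. -/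
open MeasureTheory
open scoped ENNReal

/-- for an integrable function `c` on a product of Polish probability spaces,
there is a point `y` such that for every subset `α` of coordinates the section of `c`
obtained by fixing the coordinates outside `α` to those of `y` is integrable with
`L¹`-norm at most `2^{n+1} ‖c‖₁`. -/
theorem statement10 (n : ℕ) (X : Fin n → Type)
    [∀ i, TopologicalSpace (X i)] [∀ i, PolishSpace (X i)]
    [∀ i, MeasurableSpace (X i)] [∀ i, BorelSpace (X i)]
    (μ : ∀ i, Measure (X i)) [∀ i, IsProbabilityMeasure (μ i)]
    (c : (∀ i, X i) → ℝ) (hc : Integrable c (Measure.pi μ)) :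
    ∃ y : ∀ i, X i, ∀ α : Finset (Fin n),
      Integrable (fun xα : (i : α) → X i =>
          c (fun i => if h : i ∈ α then xα ⟨i, h⟩ else y i))
        (Measure.pi fun i : α => μ i) ∧
      ∫ xα, |c (fun i => if h : i ∈ α then xα ⟨i, h⟩ else y i)|
          ∂(Measure.pi fun i : α => μ i) ≤
        2 ^ (n + 1) * ∫ x, |c x| ∂(Measure.pi μ) := by
  classical
  obtain ⟨c', hc'sm, hcc'⟩ := hc.aestronglyMeasurable
  have hc'm : Measurable c' := hc'sm.measurable
  set I : ℝ≥0∞ := ∫⁻ x, (‖c' x‖₊ : ℝ≥0∞) ∂(Measure.pi μ) with hIdef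
  have hIeq : (∫⁻ x, (‖c x‖₊ : ℝ≥0∞) ∂(Measure.pi μ)) = I :=
    lintegral_congr_ae (hcc'.mono fun x hx => by dsimp only; rw [hx])
  have hIne : I ≠ ∞ := by rw [← hIeq]; exact hc.hasFiniteIntegral.ne
  set t : ℝ≥0∞ := 2 ^ (n + 1) * I with htdef
  have htne : t ≠ ∞ := ENNReal.mul_ne_top (by simp) hIne
  -- Main estimate: for each α there is a small "bad set" outside which the lintegral
  -- of the section of ‖c'‖ is at most t.
  have hMain : ∀ α : Finset (Fin n), ∃ S : Set (∀ i, X i), MeasurableSet S ∧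
      Measure.pi μ S ≤ (2 ^ (n + 1) : ℝ≥0∞)⁻¹ ∧ ∀ y ∉ S,
        (∫⁻ v : (i : α) → X i,
            (‖c' (fun i => if h : i ∈ α then v ⟨i, h⟩ else y i)‖₊ : ℝ≥0∞)
          ∂(Measure.pi fun i : α => μ i)) ≤ t := by
    intro α
    set e := MeasurableEquiv.piEquivPiSubtypeProd X (· ∈ α) with hedef
    set να : Measure ((i : {i // i ∈ α}) → X i) := Measure.pi fun i => μ i with hνdef
    set ρα : Measure ((i : {i // ¬ i ∈ α}) → X i) := Measure.pi fun i => μ i with hρdef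
    have hpres : MeasurePreserving e (Measure.pi μ) (να.prod ρα) := by
      rw [hedef, hνdef, hρdef,
        Subsingleton.elim (Finset.Subtype.fintype α) (Subtype.fintype fun x => x ∈ α)]
      exact measurePreserving_piEquivPiSubtypeProd μ (· ∈ α)
    have hm : Measurable fun z : ((i : {i // i ∈ α}) → X i) × ((i : {i // ¬ i ∈ α}) → X i) =>
        (‖c' (e.symm z)‖₊ : ℝ≥0∞) :=
      (hc'm.comp e.symm.measurable).nnnorm.coe_nnreal_ennreal
    set G' : ((i : {i // ¬ i ∈ α}) → X i) → ℝ≥0∞ :=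
      fun w => ∫⁻ v, (‖c' (e.symm (v, w))‖₊ : ℝ≥0∞) ∂να with hG'def
    have hG'm : Measurable G' := hm.lintegral_prod_left'
    have hInt : ∫⁻ w, G' w ∂ρα = I := by
      have h1 : I = ∫⁻ z, (‖c' (e.symm z)‖₊ : ℝ≥0∞) ∂(να.prod ρα) := by
        rw [← hpres.lintegral_comp hm]
        exact lintegral_congr fun x => by rw [e.symm_apply_apply]
      rw [h1, lintegral_prod_symm' _ hm]
    have hsnd : MeasurePreserving (fun y => (e y).2) (Measure.pi μ) ρα := by
      have h2 : MeasurePreserving Prod.snd (να.prod ρα) ρα :=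
        ⟨measurable_snd, by simp⟩
      exact h2.comp hpres
    have hmeasS : MeasurableSet {w | t < G' w} := measurableSet_lt measurable_const hG'm
    have hbound : ρα {w | t < G' w} ≤ (2 ^ (n + 1) : ℝ≥0∞)⁻¹ := by
      rcases eq_or_ne I 0 with hI0 | hI0
      · have h0 : ∫⁻ w, G' w ∂ρα = 0 := by rw [hInt, hI0]
        have h0' : ∀ᵐ w ∂ρα, G' w = 0 := (lintegral_eq_zero_iff hG'm).mp h0
        have : ρα {w | t < G' w} = 0 := by
          refine measure_mono_null ?_ (ae_iff.mp h0')
          intro w hw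
          simp only [Set.mem_setOf_eq] at hw ⊢
          exact fun h => by simp [h, htdef, hI0] at hw
        simp [this]
      · have ht0 : t ≠ 0 := by
          simp only [htdef]
          exact mul_ne_zero (by positivity) hI0
        calc ρα {w | t < G' w} ≤ ρα {w | t ≤ G' w} :=
              measure_mono (Set.setOf_subset_setOf.mpr fun w hw => le_of_lt hw)
          _ ≤ (∫⁻ w, G' w ∂ρα) / t := meas_ge_le_lintegral_div hG'm.aemeasurable ht0 htne
          _ = I / (2 ^ (n + 1) * I) := by rw [hInt]
          _ = (2 ^ (n + 1) : ℝ≥0∞)⁻¹ := by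
              rw [div_eq_mul_inv,
                ENNReal.mul_inv (Or.inl (by positivity)) (Or.inl (by simp)),
                mul_comm ((2 ^ (n + 1) : ℝ≥0∞))⁻¹ I⁻¹, ← mul_assoc,
                ENNReal.mul_inv_cancel hI0 hIne, one_mul]
    refine ⟨(fun y => (e y).2) ⁻¹' {w | t < G' w},
      hsnd.measurable hmeasS, ?_, ?_⟩
    · rw [hsnd.measure_preimage hmeasS.nullMeasurableSet]
      exact hbound
    · intro y hy
      have : ¬ t < G' ((e y).2) := hy
      exact le_of_not_gt this
  -- a.e. agreement of sections of c and c'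
  have hAgree : ∀ α : Finset (Fin n), ∀ᵐ y ∂(Measure.pi μ),
      (fun v : (i : α) → X i => c (fun i => if h : i ∈ α then v ⟨i, h⟩ else y i))
        =ᵐ[Measure.pi fun i : α => μ i]
      (fun v : (i : α) → X i => c' (fun i => if h : i ∈ α then v ⟨i, h⟩ else y i)) := by
    intro α
    set e := MeasurableEquiv.piEquivPiSubtypeProd X (· ∈ α) with hedef
    set να : Measure ((i : {i // i ∈ α}) → X i) := Measure.pi fun i => μ i with hνdef
    set ρα : Measure ((i : {i // ¬ i ∈ α}) → X i) := Measure.pi fun i => μ i with hρdef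
    have hpres : MeasurePreserving e (Measure.pi μ) (να.prod ρα) := by
      rw [hedef, hνdef, hρdef,
        Subsingleton.elim (Finset.Subtype.fintype α) (Subtype.fintype fun x => x ∈ α)]
      exact measurePreserving_piEquivPiSubtypeProd μ (· ∈ α)
    have hps : MeasurePreserving e.symm (να.prod ρα) (Measure.pi μ) :=
      hpres.symm e
    have h1 : ∀ᵐ z ∂(να.prod ρα), c (e.symm z) = c' (e.symm z) :=
      hps.quasiMeasurePreserving.tendsto_ae.eventually hcc'
    have h2 : ∀ᵐ z ∂(ρα.prod να), c (e.symm (z.2, z.1)) = c' (e.symm (z.2, z.1)) :=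
      Measure.measurePreserving_swap.quasiMeasurePreserving.tendsto_ae.eventually h1
    have h3 : ∀ᵐ w ∂ρα, ∀ᵐ v ∂να, c (e.symm (v, w)) = c' (e.symm (v, w)) :=
      Measure.ae_ae_of_ae_prod h2
    have hsnd : MeasurePreserving (fun y => (e y).2) (Measure.pi μ) ρα := by
      have h2' : MeasurePreserving Prod.snd (να.prod ρα) ρα :=
        ⟨measurable_snd, by simp⟩
      exact h2'.comp hpres
    have h4 : ∀ᵐ y ∂(Measure.pi μ), ∀ᵐ v ∂να,
        c (e.symm (v, (e y).2)) = c' (e.symm (v, (e y).2)) :=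
      hsnd.quasiMeasurePreserving.tendsto_ae.eventually h3
    filter_upwards [h4] with y hy
    exact hy
  choose S hSmeas hSle hSbound using hMain
  set B := ⋃ α : Finset (Fin n), S α with hBdef
  have hBle : Measure.pi μ B ≤ 2⁻¹ := by
    calc Measure.pi μ B ≤ ∑' α : Finset (Fin n), Measure.pi μ (S α) := measure_iUnion_le _
      _ ≤ (2 ^ n : ℝ≥0∞) * (2 ^ (n + 1) : ℝ≥0∞)⁻¹ := by
          rw [tsum_fintype]
          calc ∑ α : Finset (Fin n), Measure.pi μ (S α)
              ≤ (Finset.univ : Finset (Finset (Fin n))).card • (2 ^ (n + 1) : ℝ≥0∞)⁻¹ :=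
                Finset.sum_le_card_nsmul _ _ _ fun α _ => hSle α
            _ = (2 ^ n : ℝ≥0∞) * (2 ^ (n + 1) : ℝ≥0∞)⁻¹ := by
                rw [nsmul_eq_mul]
                congr 1
                simp [Finset.card_univ, Fintype.card_finset]
      _ = 2⁻¹ := by
          rw [pow_succ, ENNReal.mul_inv (Or.inl (by positivity)) (Or.inl (by simp)),
            ← mul_assoc, ENNReal.mul_inv_cancel (by positivity) (by simp), one_mul]
  have hN : Measure.pi μ {y | ¬ ∀ α : Finset (Fin n),
      (fun v : (i : α) → X i => c (fun i => if h : i ∈ α then v ⟨i, h⟩ else y i))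
        =ᵐ[Measure.pi fun i : α => μ i]
      (fun v : (i : α) → X i => c' (fun i => if h : i ∈ α then v ⟨i, h⟩ else y i))} = 0 := by
    have := ae_all_iff.mpr hAgree
    exact this
  have hlt : Measure.pi μ (B ∪ {y | ¬ ∀ α : Finset (Fin n),
      (fun v : (i : α) → X i => c (fun i => if h : i ∈ α then v ⟨i, h⟩ else y i))
        =ᵐ[Measure.pi fun i : α => μ i]
      (fun v : (i : α) → X i => c' (fun i => if h : i ∈ α then v ⟨i, h⟩ else y i))}) < 1 := by
    refine (measure_union_le _ _).trans_lt ?_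
    rw [hN, add_zero]
    exact lt_of_le_of_lt hBle (by norm_num : ((2:ℝ≥0∞))⁻¹ < 1)
  have hne : (B ∪ {y | ¬ ∀ α : Finset (Fin n),
      (fun v : (i : α) → X i => c (fun i => if h : i ∈ α then v ⟨i, h⟩ else y i))
        =ᵐ[Measure.pi fun i : α => μ i]
      (fun v : (i : α) → X i => c' (fun i => if h : i ∈ α then v ⟨i, h⟩ else y i))})ᶜ.Nonempty := by
    rw [Set.nonempty_compl]
    intro h
    rw [h] at hlt
    simp at hlt
  obtain ⟨y, hy⟩ := hne
  rw [Set.mem_compl_iff, Set.mem_union, not_or] at hy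
  obtain ⟨hyB, hyN⟩ := hy
  rw [Set.mem_setOf_eq, not_not] at hyN
  refine ⟨y, fun α => ?_⟩
  have hG : (∫⁻ v : (i : α) → X i,
      (‖c' (fun i => if h : i ∈ α then v ⟨i, h⟩ else y i)‖₊ : ℝ≥0∞)
    ∂(Measure.pi fun i : α => μ i)) ≤ t :=
    hSbound α y (fun h => hyB (Set.mem_iUnion.mpr ⟨α, h⟩))
  have hagree := hyN α
  have hmsec : Measurable (fun v : (i : α) → X i =>
      c' (fun i => if h : i ∈ α then v ⟨i, h⟩ else y i)) := by
    have heq : (fun v : (i : α) → X i =>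
        c' (fun i => if h : i ∈ α then v ⟨i, h⟩ else y i)) =
        fun v : (i : α) → X i => c' ((MeasurableEquiv.piEquivPiSubtypeProd X (· ∈ α)).symm
          (v, fun i : {i // ¬ i ∈ α} => y i)) := rfl
    rw [heq]
    exact hc'm.comp ((MeasurableEquiv.piEquivPiSubtypeProd X (· ∈ α)).symm.measurable.comp
      (measurable_id.prodMk measurable_const))
  have hfin : HasFiniteIntegral (fun v : (i : α) → X i =>
      c' (fun i => if h : i ∈ α then v ⟨i, h⟩ else y i)) (Measure.pi fun i : α => μ i) :=
    lt_of_le_of_lt hG (lt_top_iff_ne_top.mpr htne)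
  have hint' : Integrable (fun v : (i : α) → X i =>
      c' (fun i => if h : i ∈ α then v ⟨i, h⟩ else y i)) (Measure.pi fun i : α => μ i) :=
    ⟨hmsec.aestronglyMeasurable, hfin⟩
  have hint : Integrable (fun v : (i : α) → X i =>
      c (fun i => if h : i ∈ α then v ⟨i, h⟩ else y i)) (Measure.pi fun i : α => μ i) :=
    hint'.congr hagree.symm
  refine ⟨hint, ?_⟩
  have h1 : ∫ v : (i : α) → X i, |c (fun i => if h : i ∈ α then v ⟨i, h⟩ else y i)|
        ∂(Measure.pi fun i : α => μ i) =
      ∫ v : (i : α) → X i, ‖c' (fun i => if h : i ∈ α then v ⟨i, h⟩ else y i)‖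
        ∂(Measure.pi fun i : α => μ i) := by
    refine integral_congr_ae ?_
    filter_upwards [hagree] with v hv
    rw [hv, Real.norm_eq_abs]
  have h2 := integral_norm_eq_lintegral_enorm (μ := Measure.pi fun i : α => μ i)
    hmsec.aestronglyMeasurable
  have h3 : ∫ x, |c x| ∂(Measure.pi μ) = I.toReal := by
    have : (fun x => |c x|) = fun x => ‖c x‖ := funext fun x => (Real.norm_eq_abs _).symm
    rw [this, integral_norm_eq_lintegral_enorm hc.aestronglyMeasurable, ← hIeq]
    rfl
  rw [h1, h2, h3]
  calc (∫⁻ v : (i : α) → X i,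
        (‖c' (fun i => if h : i ∈ α then v ⟨i, h⟩ else y i)‖₊ : ℝ≥0∞)
      ∂(Measure.pi fun i : α => μ i)).toReal
      ≤ t.toReal := ENNReal.toReal_mono htne hG
    _ = 2 ^ (n + 1) * I.toReal := by
        rw [htdef, ENNReal.toReal_mul]
        norm_num
end

section
/- For all natural numbers 1 ≤ k < n there exists a constant C, depending only on n and k, with the following property. Let X_1, ..., X_n be Polish spaces with Borel probability measures μ_1, ..., μ_n and let μ = ∏_{i=1}^n μ_i. For every finite (n,k)-function F ∈ L¹(∏_{i=1}^n X_i, μ) there exists a family of functions f̂_α ∈ L¹(X_α, μ_α), indexed by subsets α of size k, where μ_α = ∏_{i∈α} μ_i, such that F(x) = Σ_α f̂_α(x_α) for all x and ‖f̂_α‖_{L¹(μ_α)} ≤ C · ‖F‖_{L¹(μ)} for all α. -/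
open MeasureTheory Finset
open scoped ENNReal


/-- Inclusion–exclusion / Möbius identity. -/
lemma st11_mobius {ι : Type*} [DecidableEq ι] (s : Finset ι) :
    ∀ f : Finset ι → ℝ,
      ∑ β ∈ s.powerset, ∑ γ ∈ β.powerset, (-1 : ℝ) ^ (β.card - γ.card) * f γ = f s := by
  induction s using Finset.induction_on with
  | empty => intro f; simp
  | @insert i s hi ih =>
    intro f
    rw [Finset.sum_powerset_insert hi]
    have h1 : ∀ β ∈ s.powerset,
        ∑ γ ∈ (insert i β).powerset, (-1 : ℝ) ^ ((insert i β).card - γ.card) * f γ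
          = -(∑ γ ∈ β.powerset, (-1 : ℝ) ^ (β.card - γ.card) * f γ)
            + ∑ γ ∈ β.powerset, (-1 : ℝ) ^ (β.card - γ.card) * f (insert i γ) := by
      intro β hβ
      have hiβ : i ∉ β := fun h => hi (Finset.mem_powerset.mp hβ h)
      have e1 : ∑ γ ∈ β.powerset, (-1 : ℝ) ^ (β.card + 1 - γ.card) * f γ
          = -∑ γ ∈ β.powerset, (-1 : ℝ) ^ (β.card - γ.card) * f γ := by
        rw [← Finset.sum_neg_distrib]
        apply Finset.sum_congr rfl
        intro γ hγ
        have hc : γ.card ≤ β.card := Finset.card_le_card (Finset.mem_powerset.mp hγ)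
        have h3 : β.card + 1 - γ.card = (β.card - γ.card) + 1 := by omega
        rw [h3, pow_succ]
        ring
      have e2 : ∑ γ ∈ β.powerset, (-1 : ℝ) ^ (β.card + 1 - (insert i γ).card) * f (insert i γ)
          = ∑ γ ∈ β.powerset, (-1 : ℝ) ^ (β.card - γ.card) * f (insert i γ) := by
        apply Finset.sum_congr rfl
        intro γ hγ
        have hiγ : i ∉ γ := fun h => hiβ (Finset.mem_powerset.mp hγ h)
        have hc : γ.card ≤ β.card := Finset.card_le_card (Finset.mem_powerset.mp hγ)
        rw [Finset.card_insert_of_notMem hiγ]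
        congr 2
        omega
      rw [Finset.sum_powerset_insert hiβ, Finset.card_insert_of_notMem hiβ, e1, e2]
    rw [Finset.sum_congr rfl h1, Finset.sum_add_distrib, Finset.sum_neg_distrib,
      ih f, ih fun γ => f (insert i γ)]
    ring

/-- Cancellation: if `f` is insensitive to inserting `i ∈ β`, the signed sum over
subsets of `β` vanishes. -/
lemma st11_cancel {ι : Type*} [DecidableEq ι] {β : Finset ι} {i : ι} (hi : i ∈ β)
    (f : Finset ι → ℝ) (hf : ∀ γ, γ ⊆ β → f (insert i γ) = f γ) :
    ∑ γ ∈ β.powerset, (-1 : ℝ) ^ (β.card - γ.card) * f γ = 0 := by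
  have hie : i ∉ β.erase i := Finset.notMem_erase i β
  have hβ : insert i (β.erase i) = β := Finset.insert_erase hi
  rw [← hβ, Finset.sum_powerset_insert hie]
  have hcard : (insert i (β.erase i)).card = (β.erase i).card + 1 :=
    Finset.card_insert_of_notMem hie
  have : ∀ γ ∈ (β.erase i).powerset,
      (-1 : ℝ) ^ ((insert i (β.erase i)).card - (insert i γ).card) * f (insert i γ)
        = -((-1 : ℝ) ^ ((insert i (β.erase i)).card - γ.card) * f γ) := by
    intro γ hγ
    have hγ' := Finset.mem_powerset.mp hγ
    have hiγ : i ∉ γ := fun h => hie (hγ' h)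
    have hc : γ.card ≤ (β.erase i).card := Finset.card_le_card hγ'
    rw [Finset.card_insert_of_notMem hiγ, hcard, hf γ (hγ'.trans (Finset.erase_subset i β))]
    have h2 : (β.erase i).card + 1 - γ.card = ((β.erase i).card + 1 - (γ.card + 1)) + 1 := by
      omega
    rw [h2, pow_succ]
    ring
  rw [Finset.sum_congr rfl this, Finset.sum_neg_distrib]
  ring

/-- Restriction between pi-measures over finset subtypes is measure preserving (for probability
measures). -/
lemma st11_restrict_mp {ι : Type*} [Fintype ι] [DecidableEq ι] {X : ι → Type*}
    [∀ i, MeasurableSpace (X i)] (μ : ∀ i, Measure (X i)) [∀ i, IsProbabilityMeasure (μ i)]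
    {γ α : Finset ι} (h : γ ⊆ α) :
    MeasurePreserving (fun (y : ∀ i : α, X i) (j : γ) => y ⟨j.1, h j.2⟩)
      (Measure.pi fun i : α => μ i) (Measure.pi fun i : γ => μ i) := by
  have hmeas : Measurable (fun (y : ∀ i : α, X i) (j : γ) => y ⟨j.1, h j.2⟩) :=
    measurable_pi_lambda _ fun j => measurable_pi_apply _
  refine ⟨hmeas, ?_⟩
  refine (Measure.pi_eq (μ := fun j : γ => μ j.1) fun s hs => ?_).symm
  classical
  set s' : ∀ i : α, Set (X i) := fun i =>
    if hi : i.1 ∈ γ then s ⟨i.1, hi⟩ else Set.univ with hs'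
  have hs'm : ∀ i : α, MeasurableSet (s' i) := by
    intro i
    by_cases hi : i.1 ∈ γ
    · simpa [s', hi] using hs ⟨i.1, hi⟩
    · simp [s', hi]
  have hpre : (fun (y : ∀ i : α, X i) (j : γ) => y ⟨j.1, h j.2⟩) ⁻¹' Set.pi Set.univ s
      = Set.pi Set.univ s' := by
    ext y
    simp only [Set.mem_preimage, Set.mem_pi, Set.mem_univ, true_implies]
    constructor
    · intro hy i
      by_cases hi : i.1 ∈ γ
      · simpa [s', hi] using hy ⟨i.1, hi⟩
      · simp [s', hi]
    · intro hy j
      have := hy ⟨j.1, h j.2⟩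
      simpa [s', j.2] using this
  rw [Measure.map_apply hmeas (MeasurableSet.univ_pi hs), hpre, Measure.pi_pi]
  set t : ι → ℝ≥0∞ := fun i => if hi : i ∈ γ then μ i (s ⟨i, hi⟩) else 1 with ht
  have h1 : ∀ i : α, μ i.1 (s' i) = t i.1 := by
    intro i
    by_cases hi : i.1 ∈ γ <;> simp [s', t, hi]
  have h2 : ∀ j : γ, μ j.1 (s j) = t j.1 := by
    intro j
    simp [t, j.2]
  calc ∏ i : α, μ i.1 (s' i) = ∏ i : α, t i.1 := by
        exact Finset.prod_congr rfl fun i _ => h1 i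
    _ = ∏ i ∈ α, t i := Finset.prod_coe_sort α t
    _ = ∏ i ∈ γ, t i := by
        refine (Finset.prod_subset h fun i _ hi => ?_).symm
        simp [t, hi]
    _ = ∏ j : γ, t j.1 := (Finset.prod_coe_sort γ t).symm
    _ = ∏ j : γ, μ j.1 (s j) := Finset.prod_congr rfl fun j _ => (h2 j).symm

lemma st11_pi_congr {δ : Type*} {X : δ → Type*} [∀ d, MeasurableSpace (X d)]
    (i1 i2 : Fintype δ) (μ : ∀ d, Measure (X d)) :
    @Measure.pi δ X i1 _ μ = @Measure.pi δ X i2 _ μ := by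
  cases Subsingleton.elim i1 i2; rfl

/-- Existence of a good anchor point: all "frozen sections" of `F` are integrable with
controlled L¹ norm. -/
lemma st11_good_point {ι : Type*} [Fintype ι] [DecidableEq ι] {X : ι → Type*}
    [∀ i, MeasurableSpace (X i)] (μ : ∀ i, Measure (X i)) [∀ i, IsProbabilityMeasure (μ i)]
    (F : (∀ i, X i) → ℝ) (hF : Integrable F (Measure.pi μ)) :
    ∃ a : ∀ i, X i, ∀ γ : Finset ι,
      Integrable (fun u : ∀ i : γ, X i => F fun i => if h : i ∈ γ then u ⟨i, h⟩ else a i)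
        (Measure.pi fun i : γ => μ i) ∧
      ∫ u, |F fun i => if h : i ∈ γ then u ⟨i, h⟩ else a i| ∂(Measure.pi fun i : γ => μ i) ≤
        (2 * Fintype.card (Finset ι)) * ∫ x, |F x| ∂(Measure.pi μ) := by
  classical
  set I : ℝ := ∫ x, |F x| ∂(Measure.pi μ) with hI
  set N : ℕ := Fintype.card (Finset ι) with hN
  have hNpos : 0 < (N : ℝ) := by positivity
  set c : ℝ := (2 * N) * I with hc
  have hInonneg : 0 ≤ I := integral_nonneg fun x => abs_nonneg _
  -- the splitting equivalences
  have main : ∀ γ : Finset ι,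
      Measure.pi μ {a : ∀ i, X i |
        ¬ (Integrable (fun u : ∀ i : γ, X i => F fun i => if h : i ∈ γ then u ⟨i, h⟩ else a i)
            (Measure.pi fun i : γ => μ i) ∧
          ∫ u, |F fun i => if h : i ∈ γ then u ⟨i, h⟩ else a i|
              ∂(Measure.pi fun i : γ => μ i) ≤ c)}
        ≤ ENNReal.ofReal (1 / (2 * N)) := by
    intro γ
    set e : (∀ i, X i) ≃ᵐ (∀ i : {i // i ∈ γ}, X i) × (∀ i : {i // ¬ i ∈ γ}, X i) :=
      MeasurableEquiv.piEquivPiSubtypeProd X (fun i => i ∈ γ) with he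
    set μ₁ : Measure (∀ i : {i // i ∈ γ}, X i) := Measure.pi fun i => μ i with hμ₁
    set μ₂ : Measure (∀ i : {i // ¬ i ∈ γ}, X i) := Measure.pi fun i => μ i with hμ₂
    have hpe : MeasurePreserving e (Measure.pi μ) (μ₁.prod μ₂) := by
      have h := measurePreserving_piEquivPiSubtypeProd μ (fun i => i ∈ γ)
      convert h using 2 <;> exact st11_pi_congr _ _ _
    set H : (∀ i : {i // i ∈ γ}, X i) × (∀ i : {i // ¬ i ∈ γ}, X i) → ℝ :=
      fun z => F (e.symm z) with hH
    have hHint : Integrable H (μ₁.prod μ₂) := by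
      have := (hpe.symm e).integrable_comp_emb e.symm.measurableEmbedding (g := F)
      exact this.mpr hF
    set ψ : (∀ i : {i // ¬ i ∈ γ}, X i) → ℝ := fun v => ∫ u, ‖H (u, v)‖ ∂μ₁ with hψ
    have hψint : Integrable ψ μ₂ := hHint.integral_norm_prod_right
    have hψnonneg : ∀ v, 0 ≤ ψ v := fun v => integral_nonneg fun u => norm_nonneg _
    have hψI : ∫ v, ψ v ∂μ₂ = I := by
      rw [hψ]
      rw [← integral_prod_symm (fun z => ‖H z‖) hHint.norm]
      have h1 := hpe.integral_comp e.measurableEmbedding (fun z => ‖H z‖)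
      rw [← h1]
      apply integral_congr_ae
      filter_upwards with x
      simp [H, Real.norm_eq_abs]
    -- projection onto the second coordinate
    set proj : (∀ i, X i) → (∀ i : {i // ¬ i ∈ γ}, X i) := fun a j => a j.1 with hproj
    have hprojm : Measurable proj := measurable_pi_lambda _ fun j => measurable_pi_apply _
    have hmap : Measure.map proj (Measure.pi μ) = μ₂ := by
      have h2 : proj = Prod.snd ∘ ⇑e := rfl
      rw [h2, ← Measure.map_map measurable_snd e.measurable, hpe.map_eq, Measure.map_snd_prod,
        measure_univ, one_smul]
    -- key pointwise identity between sections and the dite formula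
    have hsec : ∀ a : ∀ i, X i,
        (fun u : ∀ i : γ, X i => F fun i => if h : i ∈ γ then u ⟨i, h⟩ else a i)
          = fun u => H (u, proj a) := by
      intro a
      funext u
      have harg : (fun i => if h : i ∈ γ then u ⟨i, h⟩ else a i) = e.symm (u, proj a) := by
        funext i
        by_cases h : i ∈ γ <;>
          simp [e, MeasurableEquiv.piEquivPiSubtypeProd,
            Equiv.piEquivPiSubtypeProd_symm_apply, h, proj]
      rw [hH, harg]
    -- bad set in the v-space
    have hbad : μ₂ ({v | ¬ Integrable (fun u => H (u, v)) μ₁} ∪ {v | c < ψ v})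
        ≤ ENNReal.ofReal (1 / (2 * N)) := by
      have hb1 : μ₂ {v | ¬ Integrable (fun u => H (u, v)) μ₁} = 0 := by
        have := hHint.prod_left_ae
        rwa [MeasureTheory.ae_iff] at this
      have hb2 : μ₂ {v | c < ψ v} ≤ ENNReal.ofReal (1 / (2 * N)) := by
        rcases eq_or_lt_of_le hInonneg with h0 | hIpos
        · -- I = 0
          have hz : ψ =ᵐ[μ₂] 0 := by
            rw [← integral_eq_zero_iff_of_nonneg hψnonneg hψint, hψI, ← h0]
          have hsub : {v | c < ψ v} ⊆ {v | ψ v ≠ 0} := by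
            intro v hv
            have : c = 0 := by rw [hc, ← h0]; ring
            simp only [Set.mem_setOf_eq] at hv ⊢
            intro h
            rw [h, this] at hv
            exact lt_irrefl _ hv
          refine le_trans (measure_mono hsub) ?_
          have : μ₂ {v | ψ v ≠ 0} = 0 := by
            rw [← MeasureTheory.ae_iff]  -- {v | ¬ ψ v = 0}
            exact hz
          rw [this]
          exact zero_le
        · -- I > 0
          have hcpos : 0 < c := by
            rw [hc]; positivity
          have hmark := mul_meas_ge_le_integral_of_nonneg
            (Filter.Eventually.of_forall hψnonneg) hψint c
          rw [hψI] at hmark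
          have hfin : μ₂ {v | c ≤ ψ v} ≠ ⊤ := measure_ne_top _ _
          have htr : (μ₂ {v | c ≤ ψ v}).toReal ≤ 1 / (2 * N) := by
            rw [hc] at hmark ⊢
            have h2N : (0:ℝ) < 2 * N := by positivity
            calc (μ₂ {v | 2 * N * I ≤ ψ v}).toReal
                ≤ I / (2 * N * I) := by
                  rw [le_div_iff₀ (by positivity)]
                  rw [measureReal_def] at hmark
                  linarith [hmark]
              _ = 1 / (2 * N) := by
                  have hd : (0:ℝ) < 2 * (N:ℝ) * I := mul_pos (by positivity) hIpos
                  rw [div_eq_div_iff hd.ne' (by positivity : (2 * (N:ℝ)) ≠ 0)]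
                  ring
          calc μ₂ {v | c < ψ v} ≤ μ₂ {v | c ≤ ψ v} :=
                measure_mono fun v (hv : c < ψ v) => (le_of_lt hv : c ≤ ψ v)
            _ = ENNReal.ofReal ((μ₂ {v | c ≤ ψ v}).toReal) := (ENNReal.ofReal_toReal hfin).symm
            _ ≤ ENNReal.ofReal (1 / (2 * N)) := ENNReal.ofReal_le_ofReal htr
      calc μ₂ ({v | ¬ Integrable (fun u => H (u, v)) μ₁} ∪ {v | c < ψ v})
          ≤ μ₂ {v | ¬ Integrable (fun u => H (u, v)) μ₁} + μ₂ {v | c < ψ v} :=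
            measure_union_le _ _
        _ ≤ 0 + ENNReal.ofReal (1 / (2 * N)) := add_le_add hb1.le hb2
        _ = ENNReal.ofReal (1 / (2 * N)) := by rw [zero_add]
    -- transfer to the a-space
    refine le_trans (measure_mono ?_) (le_trans (Measure.le_map_apply hprojm.aemeasurable _)
      (by rw [hmap]; exact hbad))
    intro a ha
    simp only [Set.mem_setOf_eq] at ha
    simp only [Set.mem_preimage, Set.mem_union, Set.mem_setOf_eq]
    by_contra hcon
    push_neg at hcon
    obtain ⟨h1, h2⟩ := hcon
    apply ha
    constructor
    · rw [hsec a]; exact h1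
    · have hplug : ∫ u, |F fun i => if h : i ∈ γ then u ⟨i, h⟩ else a i| ∂μ₁
          = ψ (proj a) := by
        rw [hψ]
        apply integral_congr_ae
        filter_upwards with u
        rw [congrFun (hsec a) u, Real.norm_eq_abs]
      rw [hplug]
      exact h2
  -- now take the union over all γ
  by_contra hcon
  push_neg at hcon
  have hcover : (Set.univ : Set (∀ i, X i)) ⊆
      ⋃ γ ∈ (Finset.univ : Finset (Finset ι)), {a : ∀ i, X i |
        ¬ (Integrable (fun u : ∀ i : γ, X i => F fun i => if h : i ∈ γ then u ⟨i, h⟩ else a i)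
            (Measure.pi fun i : γ => μ i) ∧
          ∫ u, |F fun i => if h : i ∈ γ then u ⟨i, h⟩ else a i|
              ∂(Measure.pi fun i : γ => μ i) ≤ c)} := by
    intro a _
    obtain ⟨γ, hγ⟩ := hcon a
    simp only [Set.mem_iUnion]
    exact ⟨γ, Finset.mem_univ γ, fun hAB => absurd hAB.2 (not_le.mpr (hγ hAB.1))⟩
  have hle : (1 : ℝ≥0∞) ≤ ENNReal.ofReal (1 / 2) := by
    calc (1 : ℝ≥0∞) = Measure.pi μ Set.univ := (measure_univ).symm
      _ ≤ Measure.pi μ (⋃ γ ∈ (Finset.univ : Finset (Finset ι)), _) := measure_mono hcover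
      _ ≤ ∑ γ ∈ (Finset.univ : Finset (Finset ι)), Measure.pi μ {a : ∀ i, X i |
            ¬ (Integrable (fun u : ∀ i : γ, X i =>
                  F fun i => if h : i ∈ γ then u ⟨i, h⟩ else a i)
                (Measure.pi fun i : γ => μ i) ∧
              ∫ u, |F fun i => if h : i ∈ γ then u ⟨i, h⟩ else a i|
                  ∂(Measure.pi fun i : γ => μ i) ≤ c)} := measure_biUnion_finset_le _ _
      _ ≤ ∑ _γ ∈ (Finset.univ : Finset (Finset ι)), ENNReal.ofReal (1 / (2 * N)) :=
          Finset.sum_le_sum fun γ _ => main γ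
      _ = (N : ℝ≥0∞) * ENNReal.ofReal (1 / (2 * N)) := by
          rw [Finset.sum_const, Finset.card_univ, hN, nsmul_eq_mul]
      _ = ENNReal.ofReal (N * (1 / (2 * N))) := by
          rw [ENNReal.ofReal_mul (by positivity : (0:ℝ) ≤ (N:ℝ))]
          congr 1
          exact (ENNReal.ofReal_natCast N).symm
      _ = ENNReal.ofReal (1 / 2) := by
          congr 1
          field_simp
  have : (ENNReal.ofReal (1 / 2) : ℝ≥0∞) < 1 := by
    rw [ENNReal.ofReal_lt_one]
    norm_num
  exact absurd (lt_of_le_of_lt hle this) (lt_irrefl _)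

/-- for `1 ≤ k < n` there is a constant `C`, depending only on `n` and `k`, such
that every integrable finite `(n,k)`-function `F` on a product of Polish probability spaces can
be written as `F(x) = Σ_{|α|=k} f̂_α(x_α)` with each `f̂_α` integrable and
`‖f̂_α‖₁ ≤ C·‖F‖₁`. -/
theorem statement11 (n k : ℕ) (hk : 1 ≤ k) (hkn : k < n) :
    ∃ C : ℝ,
      ∀ (X : Fin n → Type)
        [∀ i, TopologicalSpace (X i)] [∀ i, PolishSpace (X i)]
        [∀ i, MeasurableSpace (X i)] [∀ i, BorelSpace (X i)]
        (μ : ∀ i, Measure (X i)), (∀ i, IsProbabilityMeasure (μ i)) →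
        ∀ F : (∀ i, X i) → ℝ,
          Integrable F (Measure.pi μ) →
          (∃ f : (α : Finset (Fin n)) → ((i : α) → X i) → ℝ,
            ∀ x : ∀ i, X i,
              F x = ∑ α ∈ Finset.powersetCard k (Finset.univ : Finset (Fin n)),
                f α (fun i => x i)) →
          ∃ g : (α : Finset (Fin n)) → ((i : α) → X i) → ℝ,
            (∀ α ∈ Finset.powersetCard k (Finset.univ : Finset (Fin n)),
              Integrable (g α) (Measure.pi fun i : α => μ i) ∧
              ∫ y, |g α y| ∂(Measure.pi fun i : α => μ i) ≤
                C * ∫ x, |F x| ∂(Measure.pi μ)) ∧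
            ∀ x : ∀ i, X i,
              F x = ∑ α ∈ Finset.powersetCard k (Finset.univ : Finset (Fin n)),
                g α (fun i => x i) := by
  classical
  refine ⟨(2:ℝ)^n * 2^n * (2 * Fintype.card (Finset (Fin n))), ?_⟩
  intro X _ _ _ _ μ hμ F hFint hdecomp
  haveI : ∀ i, IsProbabilityMeasure (μ i) := hμ
  obtain ⟨f, hf⟩ := hdecomp
  obtain ⟨a, ha⟩ := st11_good_point μ F hFint
  set I : ℝ := ∫ x, |F x| ∂(Measure.pi μ) with hI
  have hInonneg : 0 ≤ I := integral_nonneg fun x => abs_nonneg _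
  set c : ℝ := (2 * Fintype.card (Finset (Fin n))) * I with hc
  have hcnonneg : 0 ≤ c := by positivity
  -- basic patching functions
  set T : Finset (Fin n) → (∀ i, X i) → (∀ i, X i) :=
    fun γ z i => if i ∈ γ then z i else a i with hT
  set EF : ∀ α' : Finset (Fin n), ((i : α') → X i) → (∀ i, X i) :=
    fun α' y i => if h : i ∈ α' then y ⟨i, h⟩ else a i with hEF
  -- the extension function
  have hextE : ∀ β : Finset (Fin n),
      ∃ u : Finset (Fin n), β.card ≤ k → (β ⊆ u ∧ u.card = k) := by
    intro β
    by_cases h : β.card ≤ k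
    · obtain ⟨u, h1, _, h3⟩ := Finset.exists_subsuperset_card_eq (Finset.subset_univ β) h
        (by simp only [Finset.card_univ, Fintype.card_fin]; omega)
      exact ⟨u, fun _ => ⟨h1, h3⟩⟩
    · exact ⟨∅, fun hh => absurd hh h⟩
  choose ext hextP using hextE
  set S : Finset (Finset (Fin n)) :=
    (Finset.univ : Finset (Fin n)).powerset.filter (fun β => β.card ≤ k) with hS
  -- the candidate family
  refine ⟨fun α' y => ∑ β ∈ S.filter (fun β => ext β = α'),
    ∑ γ ∈ β.powerset, (-1:ℝ)^(β.card - γ.card) * F (T γ (EF α' y)), ?_, ?_⟩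
  · -- integrability and norm bounds
    intro α hα
    obtain ⟨hαuniv, hαcard⟩ := Finset.mem_powersetCard.mp hα
    -- facts about the sum terms
    have hsub : ∀ β ∈ S.filter (fun β => ext β = α), ∀ γ ∈ β.powerset, γ ⊆ α := by
      intro β hβ γ hγ
      obtain ⟨hβS, hβα⟩ := Finset.mem_filter.mp hβ
      obtain ⟨-, hβk⟩ := Finset.mem_filter.mp hβS
      exact (Finset.mem_powerset.mp hγ).trans (hβα ▸ (hextP β hβk).1)
    -- rewrite each term as a section composed with a restriction
    have hterm : ∀ (γ : Finset (Fin n)) (hγα : γ ⊆ α),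
        (fun y : (i : α) → X i => F (T γ (EF α y)))
          = (fun u : ∀ i : γ, X i => F fun i => if h : i ∈ γ then u ⟨i, h⟩ else a i) ∘
            (fun y (j : γ) => y ⟨j.1, hγα j.2⟩) := by
      intro γ hγα
      funext y
      simp only [Function.comp_apply]
      congr 1
      funext i
      by_cases h : i ∈ γ
      · simp [hT, hEF, h, hγα h]
      · simp [hT, hEF, h]
    have hint : ∀ (γ : Finset (Fin n)) (hγα : γ ⊆ α),
        Integrable (fun y : (i : α) → X i => F (T γ (EF α y)))
          (Measure.pi fun i : α => μ i) := by
      intro γ hγα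
      rw [hterm γ hγα]
      exact memLp_one_iff_integrable.mp
        ((memLp_one_iff_integrable.mpr (ha γ).1).comp_measurePreserving
          (st11_restrict_mp μ hγα))
    have hbound : ∀ (γ : Finset (Fin n)) (hγα : γ ⊆ α),
        ∫ y, |F (T γ (EF α y))| ∂(Measure.pi fun i : α => μ i) ≤ c := by
      intro γ hγα
      have hmp := st11_restrict_mp (X := X) μ hγα
      have habs : AEStronglyMeasurable
          (fun u : ∀ i : γ, X i => |F fun i => if h : i ∈ γ then u ⟨i, h⟩ else a i|)
          (Measure.pi fun i : γ => μ i) := ((ha γ).1.abs).aestronglyMeasurable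
      have heq : ∫ y, |F (T γ (EF α y))| ∂(Measure.pi fun i : α => μ i)
          = ∫ u, |F fun i => if h : i ∈ γ then u ⟨i, h⟩ else a i|
              ∂(Measure.pi fun i : γ => μ i) := by
        rw [← hmp.map_eq, integral_map hmp.measurable.aemeasurable]
        · apply integral_congr_ae
          filter_upwards with y
          rw [congrFun (hterm γ hγα) y]
          rfl
        · rw [hmp.map_eq]; exact habs
      rw [heq]
      exact (ha γ).2
    constructor
    · apply integrable_finset_sum
      intro β hβ
      apply integrable_finset_sum
      intro γ hγ
      exact ((hint γ (hsub β hβ γ hγ)).const_mul _)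
    · -- the norm bound
      have habs_le : ∀ y : (i : α) → X i,
          |∑ β ∈ S.filter (fun β => ext β = α),
            ∑ γ ∈ β.powerset, (-1:ℝ)^(β.card - γ.card) * F (T γ (EF α y))|
          ≤ ∑ β ∈ S.filter (fun β => ext β = α),
            ∑ γ ∈ β.powerset, |F (T γ (EF α y))| := by
        intro y
        refine (Finset.abs_sum_le_sum_abs _ _).trans ?_
        apply Finset.sum_le_sum
        intro β hβ
        refine (Finset.abs_sum_le_sum_abs _ _).trans ?_
        apply Finset.sum_le_sum
        intro γ hγ
        rw [abs_mul, abs_pow, abs_neg, abs_one, one_pow, one_mul]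
      have hintsum : Integrable (fun y : (i : α) → X i =>
          ∑ β ∈ S.filter (fun β => ext β = α),
            ∑ γ ∈ β.powerset, |F (T γ (EF α y))|) (Measure.pi fun i : α => μ i) := by
        apply integrable_finset_sum
        intro β hβ
        apply integrable_finset_sum
        intro γ hγ
        exact (hint γ (hsub β hβ γ hγ)).abs
      have hgint : Integrable (fun y : (i : α) → X i =>
          ∑ β ∈ S.filter (fun β => ext β = α),
            ∑ γ ∈ β.powerset, (-1:ℝ)^(β.card - γ.card) * F (T γ (EF α y)))
          (Measure.pi fun i : α => μ i) := by
        apply integrable_finset_sum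
        intro β hβ
        apply integrable_finset_sum
        intro γ hγ
        exact ((hint γ (hsub β hβ γ hγ)).const_mul _)
      calc ∫ y, |∑ β ∈ S.filter (fun β => ext β = α),
              ∑ γ ∈ β.powerset, (-1:ℝ)^(β.card - γ.card) * F (T γ (EF α y))|
              ∂(Measure.pi fun i : α => μ i)
          ≤ ∫ y, (∑ β ∈ S.filter (fun β => ext β = α),
              ∑ γ ∈ β.powerset, |F (T γ (EF α y))|) ∂(Measure.pi fun i : α => μ i) :=
            integral_mono hgint.abs hintsum habs_le
        _ = ∑ β ∈ S.filter (fun β => ext β = α), ∑ γ ∈ β.powerset,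
              ∫ y, |F (T γ (EF α y))| ∂(Measure.pi fun i : α => μ i) := by
            rw [integral_finset_sum _ fun β hβ => integrable_finset_sum _
              fun γ hγ => (hint γ (hsub β hβ γ hγ)).abs]
            exact Finset.sum_congr rfl fun β hβ => integral_finset_sum _
              fun γ hγ => (hint γ (hsub β hβ γ hγ)).abs
        _ ≤ ∑ β ∈ S.filter (fun β => ext β = α), ∑ γ ∈ β.powerset, c := by
            apply Finset.sum_le_sum
            intro β hβ
            apply Finset.sum_le_sum
            intro γ hγ
            exact hbound γ (hsub β hβ γ hγ)
        _ ≤ (2:ℝ)^n * 2^n * (2 * Fintype.card (Finset (Fin n))) * I := by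
            have h1 : ∀ β ∈ S.filter (fun β => ext β = α),
                (∑ _γ ∈ β.powerset, c) ≤ (2:ℝ)^n * c := by
              intro β hβ
              rw [Finset.sum_const, nsmul_eq_mul, Finset.card_powerset]
              have hβn : β.card ≤ n := by
                have := Finset.card_le_card (Finset.subset_univ β)
                simpa [Finset.card_univ] using this
              have : (2:ℝ)^β.card ≤ 2^n := by
                apply pow_le_pow_right₀ (by norm_num) hβn
              calc ((2^β.card : ℕ) : ℝ) * c = (2:ℝ)^β.card * c := by push_cast; ring
                _ ≤ (2:ℝ)^n * c := by nlinarith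
            calc ∑ β ∈ S.filter (fun β => ext β = α), ∑ _γ ∈ β.powerset, c
                ≤ ∑ _β ∈ S.filter (fun β => ext β = α), (2:ℝ)^n * c :=
                  Finset.sum_le_sum h1
              _ = (S.filter (fun β => ext β = α)).card * ((2:ℝ)^n * c) := by
                  rw [Finset.sum_const, nsmul_eq_mul]
              _ ≤ (2:ℝ)^n * ((2:ℝ)^n * c) := by
                  have hcard : (S.filter (fun β => ext β = α)).card ≤ 2^n := by
                    calc (S.filter (fun β => ext β = α)).card
                        ≤ S.card := Finset.card_le_card (Finset.filter_subset _ _)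
                      _ ≤ (Finset.univ : Finset (Fin n)).powerset.card :=
                          Finset.card_le_card (Finset.filter_subset _ _)
                      _ = 2^n := by rw [Finset.card_powerset, Finset.card_univ,
                          Fintype.card_fin]
                  have : ((S.filter (fun β => ext β = α)).card : ℝ) ≤ (2:ℝ)^n := by
                    calc ((S.filter (fun β => ext β = α)).card : ℝ)
                        ≤ ((2^n : ℕ) : ℝ) := by exact_mod_cast hcard
                      _ = (2:ℝ)^n := by push_cast; ring
                  nlinarith [mul_nonneg (pow_nonneg (by norm_num : (0:ℝ) ≤ 2) n) hcnonneg]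
              _ = (2:ℝ)^n * 2^n * (2 * Fintype.card (Finset (Fin n))) * I := by
                  rw [hc]; ring
  · -- the pointwise identity
    intro x
    have hTEF : ∀ (α' : Finset (Fin n)) (β : Finset (Fin n)),
        β ∈ S.filter (fun β => ext β = α') → ∀ γ ∈ β.powerset,
        T γ (EF α' (fun i : α' => x i.1)) = T γ x := by
      intro α' β hβ γ hγ
      obtain ⟨hβS, hβα⟩ := Finset.mem_filter.mp hβ
      obtain ⟨-, hβk⟩ := Finset.mem_filter.mp hβS
      have hγα : γ ⊆ α' := (Finset.mem_powerset.mp hγ).trans (hβα ▸ (hextP β hβk).1)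
      funext i
      by_cases h : i ∈ γ
      · simp [hT, hEF, h, hγα h]
      · simp [hT, hEF, h]
    have step1 : ∑ α' ∈ Finset.powersetCard k (Finset.univ : Finset (Fin n)),
        (∑ β ∈ S.filter (fun β => ext β = α'),
          ∑ γ ∈ β.powerset, (-1:ℝ)^(β.card - γ.card) * F (T γ (EF α' (fun i : α' => x i.1))))
        = ∑ α' ∈ Finset.powersetCard k (Finset.univ : Finset (Fin n)),
          ∑ β ∈ S.filter (fun β => ext β = α'),
            ∑ γ ∈ β.powerset, (-1:ℝ)^(β.card - γ.card) * F (T γ x) := by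
      refine Finset.sum_congr rfl fun α' _ => Finset.sum_congr rfl fun β hβ =>
        Finset.sum_congr rfl fun γ hγ => ?_
      rw [hTEF α' β hβ γ hγ]
    have step2 : ∑ α' ∈ Finset.powersetCard k (Finset.univ : Finset (Fin n)),
          ∑ β ∈ S.filter (fun β => ext β = α'),
            ∑ γ ∈ β.powerset, (-1:ℝ)^(β.card - γ.card) * F (T γ x)
        = ∑ β ∈ S, ∑ γ ∈ β.powerset, (-1:ℝ)^(β.card - γ.card) * F (T γ x) := by
      apply Finset.sum_fiberwise_of_maps_to
      intro β hβ
      obtain ⟨-, hβk⟩ := Finset.mem_filter.mp hβ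
      exact Finset.mem_powersetCard.mpr ⟨Finset.subset_univ _, (hextP β hβk).2⟩
    have step3 : ∑ β ∈ S, ∑ γ ∈ β.powerset, (-1:ℝ)^(β.card - γ.card) * F (T γ x)
        = ∑ β ∈ (Finset.univ : Finset (Fin n)).powerset,
            ∑ γ ∈ β.powerset, (-1:ℝ)^(β.card - γ.card) * F (T γ x) := by
      apply Finset.sum_subset (Finset.filter_subset _ _)
      intro β hβ hβS
      have hβk : k < β.card := by
        by_contra hcon
        exact hβS (Finset.mem_filter.mpr ⟨hβ, not_lt.mp hcon⟩)
      -- G β x = 0 by the cancellation lemma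
      have hFT : ∀ γ : Finset (Fin n), F (T γ x)
          = ∑ α' ∈ Finset.powersetCard k (Finset.univ : Finset (Fin n)),
              f α' (fun j : α' => T γ x j.1) := fun γ => hf (T γ x)
      calc ∑ γ ∈ β.powerset, (-1:ℝ)^(β.card - γ.card) * F (T γ x)
          = ∑ γ ∈ β.powerset, ∑ α' ∈ Finset.powersetCard k (Finset.univ : Finset (Fin n)),
              (-1:ℝ)^(β.card - γ.card) * f α' (fun j : α' => T γ x j.1) := by
            refine Finset.sum_congr rfl fun γ _ => ?_
            rw [hFT γ, Finset.mul_sum]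
        _ = ∑ α' ∈ Finset.powersetCard k (Finset.univ : Finset (Fin n)),
              ∑ γ ∈ β.powerset, (-1:ℝ)^(β.card - γ.card) * f α' (fun j : α' => T γ x j.1) :=
            Finset.sum_comm
        _ = 0 := by
            apply Finset.sum_eq_zero
            intro α' hα'
            obtain ⟨-, hα'card⟩ := Finset.mem_powersetCard.mp hα'
            have hnsub : ¬ β ⊆ α' := by
              intro hcon
              have := Finset.card_le_card hcon
              omega
            obtain ⟨i, hiβ, hiα'⟩ := Finset.not_subset.mp hnsub
            apply st11_cancel hiβ
            intro γ hγβ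
            congr 1
            funext j
            have hne : (j : Fin n) ≠ i := fun h => hiα' (h ▸ j.2)
            by_cases hj : (j : Fin n) ∈ γ <;>
              simp [hT, Finset.mem_insert, hne, hj]
    have step4 : ∑ β ∈ (Finset.univ : Finset (Fin n)).powerset,
          ∑ γ ∈ β.powerset, (-1:ℝ)^(β.card - γ.card) * F (T γ x)
        = F (T Finset.univ x) :=
      st11_mobius (Finset.univ : Finset (Fin n)) (fun γ => F (T γ x))
    have hTuniv : T Finset.univ x = x := by
      funext i
      simp [hT]
    rw [step1, step2, step3, step4, hTuniv]
end
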